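/- arXiv:1812.03059 — 2 statements merged into one kernel-verified Lean document; each statement's English description precedes it below -/
import Mathlib

section
/- Suppose p = √2−1, and let T = inf{n ≥ 1 : S_n = 0}. Then P(ξ_1 = 1 and T < ∞) = p. -/
open MeasureTheory ProbabilityTheory Filter
open scoped ENNReal Classical
open scoped NNReal

set_option linter.unusedSectionVars false
set_option maxHeartbeats 1000000

noncomputable section

variable {Ω : Type*} [MeasurableSpace Ω]

/-- The `k`-th step of the ladder chain `L(2,2,p)` built from the driving
sequence `ξ` (indexed from 1): `X₁ = ±1` according to `ξ₁`, and for `k ≥ 2`,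
`X_k = -1` if `ξ_k = -1`, `X_k = 2` if `ξ_k = ξ_{k-1} = 1`, and `X_k = 1`
if `ξ_k = 1, ξ_{k-1} = -1`. -/
def ladderX (ξ : ℕ → Ω → ℤ) (k : ℕ) (ω : Ω) : ℤ :=
  if k = 1 then (if ξ 1 ω = 1 then 1 else -1)
  else if ξ k ω = -1 then -1
  else if ξ (k - 1) ω = 1 then 2 else 1

/-- The ladder chain `S_n = X₁ + ⋯ + X_n` (with `S_0 = 0`). -/
def ladderS (ξ : ℕ → Ω → ℤ) (n : ℕ) (ω : Ω) : ℤ :=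
  ∑ k ∈ Finset.Icc 1 n, ladderX ξ k ω

section Ladder

variable (ξ : ℕ → Ω → ℤ) (p : ℝ)

/-- The martingale `M n = S (n+1) + p · 1{ξ (n+1) = 1}`. -/
def ladderM (n : ℕ) (ω : Ω) : ℝ :=
  (ladderS ξ (n + 1) ω : ℝ) + p * (if ξ (n + 1) ω = 1 then 1 else 0)

/-- Martingale increments. -/
def ladderD (n : ℕ) (ω : Ω) : ℝ := ladderM ξ p (n + 1) ω - ladderM ξ p n ω

/-- "Still alive at time `n`": the walk has stayed `≥ 1` up to `S (n+1)`. -/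
def ladderA (n : ℕ) (ω : Ω) : Prop := ∀ k ≤ n, 1 ≤ ladderS ξ (k + 1) ω

/-- The stopped martingale. -/
def ladderY (n : ℕ) (ω : Ω) : ℝ :=
  ladderM ξ p 0 ω + ∑ k ∈ Finset.range n, (if ladderA ξ k ω then ladderD ξ p k ω else 0)

lemma ladderS_succ (n : ℕ) (ω : Ω) :
    ladderS ξ (n + 1) ω = ladderS ξ n ω + ladderX ξ (n + 1) ω := by
  unfold ladderS
  rw [Finset.sum_Icc_succ_top (by omega : 1 ≤ n + 1)]

lemma ladderX_cases (k : ℕ) (ω : Ω) :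
    ladderX ξ k ω = -1 ∨ ladderX ξ k ω = 1 ∨ ladderX ξ k ω = 2 := by
  unfold ladderX; split_ifs <;> simp

lemma ladderX_ge (k : ℕ) (ω : Ω) : -1 ≤ ladderX ξ k ω := by
  rcases ladderX_cases ξ k ω with h | h | h <;> omega

lemma ladderX_le (k : ℕ) (ω : Ω) : ladderX ξ k ω ≤ 2 := by
  rcases ladderX_cases ξ k ω with h | h | h <;> omega

lemma ladderS_abs_le (n : ℕ) (ω : Ω) : |ladderS ξ n ω| ≤ 2 * n := by
  induction n with
  | zero => simp [ladderS]
  | succ n ih =>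
      rw [ladderS_succ]
      have h1 := ladderX_ge ξ (n + 1) ω
      have h2 := ladderX_le ξ (n + 1) ω
      rw [abs_le] at *
      constructor <;> [skip; skip] <;> push_cast <;> omega

lemma ladderS_one (ω : Ω) : ladderS ξ 1 ω = if ξ 1 ω = 1 then 1 else -1 := by
  simp [ladderS, ladderX]

lemma ladderD_eq (hval : ∀ n ω, ξ n ω = 1 ∨ ξ n ω = -1) (n : ℕ) (ω : Ω) :
    ladderD ξ p n ω =
      (if ξ (n + 1) ω = 1 then (1 : ℝ) else 0) * (if ξ (n + 2) ω = 1 then 2 else -1 - p)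
      + (if ξ (n + 1) ω = 1 then (0 : ℝ) else 1) * (if ξ (n + 2) ω = 1 then 1 + p else -1) := by
  have hX : ladderX ξ (n + 2) ω =
      if ξ (n + 2) ω = -1 then -1 else if ξ (n + 1) ω = 1 then 2 else 1 := by
    unfold ladderX
    rw [if_neg (by omega : ¬ n + 2 = 1)]
    norm_num
  rcases hval (n + 1) ω with h1 | h1 <;> rcases hval (n + 2) ω with h2 | h2 <;>
    simp [ladderD, ladderM, ladderS_succ ξ (n + 1), hX, h1, h2] <;> push_cast <;> ring

lemma ladderD_abs_ge (hval : ∀ n ω, ξ n ω = 1 ∨ ξ n ω = -1) (hp0 : 0 ≤ p) (n : ℕ) (ω : Ω) :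
    1 ≤ |ladderD ξ p n ω| := by
  rw [ladderD_eq ξ p hval n ω]
  rcases hval (n + 1) ω with h1 | h1 <;> rcases hval (n + 2) ω with h2 | h2 <;>
    simp [h1, h2] <;>
    first
      | (rw [abs_of_nonneg (by linarith)]; linarith)
      | (rw [abs_of_nonpos (by linarith)]; linarith)

/-- The natural filtration: `F n = σ(ξ 1, …, ξ (n+1))`. -/
def ladderF (hmeas : ∀ n, Measurable (ξ n)) : Filtration ℕ ‹MeasurableSpace Ω› where
  seq n := ⨆ i ∈ Set.Icc 1 (n + 1), MeasurableSpace.comap (ξ i) inferInstance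
  mono' i j hij := biSup_mono (Set.Icc_subset_Icc_right (by omega))
  le' n := iSup₂_le fun i _ => (hmeas i).comap_le

variable (hmeas : ∀ n, Measurable (ξ n))

lemma measurable_xi_F {n i : ℕ} (h1 : 1 ≤ i) (h2 : i ≤ n + 1) :
    Measurable[ladderF ξ hmeas n] (ξ i) := by
  refine Measurable.of_comap_le ?_
  show MeasurableSpace.comap (ξ i) inferInstance ≤
    ⨆ j ∈ Set.Icc 1 (n + 1), MeasurableSpace.comap (ξ j) inferInstance
  exact le_biSup (fun j => MeasurableSpace.comap (ξ j) inferInstance) (Set.mem_Icc.2 ⟨h1, h2⟩)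

lemma measurableSet_xi_eq {m' : MeasurableSpace Ω} {f : Ω → ℤ} (hf : Measurable[m'] f) (c : ℤ) :
    MeasurableSet[m'] {ω | f ω = c} :=
  hf (measurableSet_singleton c)

lemma measurable_ladderX_F {n k : ℕ} (h1 : 1 ≤ k) (h2 : k ≤ n + 1) :
    Measurable[ladderF ξ hmeas n] (ladderX ξ k) := by
  unfold ladderX
  by_cases hk : k = 1
  · subst hk
    simp only [reduceIte]
    exact Measurable.ite (measurableSet_xi_eq (measurable_xi_F ξ hmeas h1 h2) 1)
      measurable_const measurable_const
  · simp only [if_neg hk]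
    refine Measurable.ite (measurableSet_xi_eq (measurable_xi_F ξ hmeas h1 h2) (-1))
      measurable_const ?_
    exact Measurable.ite
      (measurableSet_xi_eq (measurable_xi_F ξ hmeas (by omega : 1 ≤ k - 1) (by omega)) 1)
      measurable_const measurable_const

lemma measurable_ladderS_F {n m : ℕ} (h : m ≤ n + 1) :
    Measurable[ladderF ξ hmeas n] (ladderS ξ m) := by
  unfold ladderS
  refine Finset.measurable_sum _ fun k hk => ?_
  rw [Finset.mem_Icc] at hk
  exact measurable_ladderX_F ξ hmeas hk.1 (by omega)

lemma measurable_cast {m' : MeasurableSpace Ω} {f : Ω → ℤ} (hf : Measurable[m'] f) :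
    Measurable[m'] (fun ω => (f ω : ℝ)) :=
  Measurable.comp measurable_from_top hf

lemma measurable_ladderM_F (n : ℕ) : Measurable[ladderF ξ hmeas n] (ladderM ξ p n) := by
  refine Measurable.add (measurable_cast (measurable_ladderS_F ξ hmeas le_rfl)) ?_
  exact Measurable.const_mul
    (Measurable.ite (measurableSet_xi_eq (measurable_xi_F ξ hmeas (by omega) le_rfl) 1)
      measurable_const measurable_const) p

lemma measurable_ladderD_F (n : ℕ) : Measurable[ladderF ξ hmeas (n + 1)] (ladderD ξ p n) :=
  Measurable.sub (measurable_ladderM_F ξ p hmeas (n + 1))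
    ((measurable_ladderM_F ξ p hmeas n).mono ((ladderF ξ hmeas).mono (by omega)) le_rfl)

lemma measurableSet_ladderA_F (n : ℕ) :
    MeasurableSet[ladderF ξ hmeas n] {ω | ladderA ξ n ω} := by
  have : {ω | ladderA ξ n ω} = ⋂ k ∈ Set.Iic n, {ω | 1 ≤ ladderS ξ (k + 1) ω} := by
    ext ω; simp [ladderA]
  rw [this]
  refine MeasurableSet.biInter (Set.to_countable _) fun k hk => ?_
  have hmk : Measurable[ladderF ξ hmeas n] (ladderS ξ (k + 1)) :=
    measurable_ladderS_F ξ hmeas (by simpa using hk)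
  exact hmk (MeasurableSpace.measurableSet_top (s := {z : ℤ | 1 ≤ z}))

lemma measurable_ladderY_F (n : ℕ) : Measurable[ladderF ξ hmeas n] (ladderY ξ p n) := by
  refine Measurable.add
    ((measurable_ladderM_F ξ p hmeas 0).mono ((ladderF ξ hmeas).mono (Nat.zero_le n)) le_rfl) ?_
  refine Finset.measurable_sum _ fun k hk => ?_
  rw [Finset.mem_range] at hk
  refine Measurable.ite ?_ ?_ measurable_const
  · exact (ladderF ξ hmeas).mono (by omega) _ (measurableSet_ladderA_F ξ hmeas k)
  · exact (measurable_ladderD_F ξ p hmeas k).mono ((ladderF ξ hmeas).mono (by omega)) le_rfl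

variable (P : Measure Ω) [IsProbabilityMeasure P]

lemma integrable_of_abs_le {f : Ω → ℝ} (hf : AEStronglyMeasurable f P) (C : ℝ)
    (h : ∀ ω, |f ω| ≤ C) : Integrable f P :=
  (integrable_const C).mono' hf (ae_of_all _ fun ω => by simpa [Real.norm_eq_abs] using h ω)

lemma ladderM_abs_le (n : ℕ) (ω : Ω) : |ladderM ξ p n ω| ≤ 2 * (n + 1) + |p| := by
  unfold ladderM
  refine (abs_add_le _ _).trans (add_le_add ?_ ?_)
  · have h := ladderS_abs_le ξ (n + 1) ω
    rw [← Int.cast_abs]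
    exact_mod_cast h
  · rw [abs_mul]
    have : |if ξ (n + 1) ω = 1 then (1 : ℝ) else 0| ≤ 1 := by
      split_ifs <;> simp
    calc |p| * |if ξ (n + 1) ω = 1 then (1 : ℝ) else 0| ≤ |p| * 1 := by
          exact mul_le_mul_of_nonneg_left this (abs_nonneg p)
      _ = |p| := mul_one _

include hmeas

lemma integrable_ladderM (n : ℕ) : Integrable (ladderM ξ p n) P :=
  integrable_of_abs_le P
    (((measurable_ladderM_F ξ p hmeas n).mono ((ladderF ξ hmeas).le n) le_rfl).aestronglyMeasurable)
    _ (ladderM_abs_le ξ p n)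

lemma integrable_ladderD (n : ℕ) : Integrable (ladderD ξ p n) P := by
  have : ladderD ξ p n = fun ω => ladderM ξ p (n + 1) ω - ladderM ξ p n ω := rfl
  rw [this]
  exact (integrable_ladderM ξ p hmeas P (n + 1)).sub (integrable_ladderM ξ p hmeas P n)

lemma measurableSet_ladderA (n : ℕ) : MeasurableSet {ω | ladderA ξ n ω} :=
  ((ladderF ξ hmeas).le n) _ (measurableSet_ladderA_F ξ hmeas n)

lemma integrable_stopped_incr (n : ℕ) :
    Integrable (fun ω => if ladderA ξ n ω then ladderD ξ p n ω else 0) P := by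
  have : (fun ω => if ladderA ξ n ω then ladderD ξ p n ω else 0)
      = Set.indicator {ω | ladderA ξ n ω} (ladderD ξ p n) := by
    funext ω
    by_cases h : ladderA ξ n ω <;> simp [Set.indicator_apply, h]
  rw [this]
  exact (integrable_ladderD ξ p hmeas P n).indicator (measurableSet_ladderA ξ hmeas n)

lemma integrable_ladderY (n : ℕ) : Integrable (ladderY ξ p n) P := by
  have : ladderY ξ p n = fun ω =>
      ladderM ξ p 0 ω + ∑ k ∈ Finset.range n, (if ladderA ξ k ω then ladderD ξ p k ω else 0) :=
    rfl
  rw [this]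
  refine (integrable_ladderM ξ p hmeas P 0).add ?_
  exact integrable_finset_sum (Finset.range n) fun k _ => integrable_stopped_incr ξ p hmeas P k

lemma integrable_ite_xi (m : ℕ) (a b : ℝ) :
    Integrable (fun ω => if ξ m ω = 1 then a else b) P := by
  refine integrable_of_abs_le P ?_ (|a| + |b|) ?_
  · exact (Measurable.ite (measurableSet_xi_eq (hmeas m) 1) measurable_const
      measurable_const).aestronglyMeasurable
  · intro ω
    have ha := abs_nonneg a; have hb := abs_nonneg b
    split_ifs <;> simp <;> linarith [le_abs_self a, le_abs_self b]

lemma integrable_ite_mul (m m' : ℕ) (a b c d : ℝ) :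
    Integrable (fun ω =>
      (if ξ m ω = 1 then a else b) * (if ξ m' ω = 1 then c else d)) P := by
  refine integrable_of_abs_le P ?_ ((|a| + |b|) * (|c| + |d|)) ?_
  · exact ((Measurable.ite (measurableSet_xi_eq (hmeas m) 1) measurable_const
      measurable_const).mul (Measurable.ite (measurableSet_xi_eq (hmeas m') 1)
      measurable_const measurable_const)).aestronglyMeasurable
  · intro ω
    rw [abs_mul]
    have ha := abs_nonneg a; have hb := abs_nonneg b
    have hc := abs_nonneg c; have hd := abs_nonneg d
    refine mul_le_mul ?_ ?_ (abs_nonneg _) (by linarith)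
    · split_ifs <;> linarith [le_abs_self a, le_abs_self b, neg_abs_le a, neg_abs_le b,
        abs_nonneg a, abs_nonneg b] <;> simp [abs_le] <;> constructor <;> linarith
    · split_ifs <;> rw [abs_le] <;> constructor <;>
        linarith [le_abs_self c, le_abs_self d, neg_abs_le c, neg_abs_le d]

lemma integral_two_point (hp0 : 0 ≤ p) {m : ℕ}
    (hprob_m : P {ω | ξ m ω = 1} = ENNReal.ofReal p) (a b : ℝ) :
    ∫ ω, (if ξ m ω = 1 then a else b) ∂P = a * p + b * (1 - p) := by
  have hs : MeasurableSet {ω | ξ m ω = 1} := measurableSet_xi_eq (hmeas m) 1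
  have hrw : (fun ω => if ξ m ω = 1 then a else b)
      = fun ω => b + Set.indicator {ω | ξ m ω = 1} (fun _ => a - b) ω := by
    funext ω
    by_cases h : ξ m ω = 1 <;> simp [Set.indicator_apply, h]
  rw [hrw, integral_add (integrable_const b) ((integrable_const (a - b)).indicator hs),
    integral_indicator_const _ hs, integral_const]
  simp [hprob_m, ENNReal.toReal_ofReal hp0]
  rw [measureReal_def, hprob_m, ENNReal.toReal_ofReal hp0]
  ring

lemma ladderF_apply (n : ℕ) :
    ladderF ξ hmeas n = ⨆ i ∈ Set.Icc 1 (n + 1), MeasurableSpace.comap (ξ i) inferInstance := rfl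

lemma indep_xi_F (hindep : iIndepFun ξ P) (n : ℕ) :
    Indep (MeasurableSpace.comap (ξ (n + 2)) inferInstance) (ladderF ξ hmeas n) P := by
  have h := indep_iSup_of_disjoint (fun i => (hmeas i).comap_le) hindep
    (S := {n + 2}) (T := Set.Icc 1 (n + 1))
    (by rw [Set.disjoint_left]; intro a ha hb; rw [Set.mem_singleton_iff] at ha
        rw [Set.mem_Icc] at hb; omega)
  rw [ladderF_apply]
  simpa using h

lemma condexp_two_point (hindep : iIndepFun ξ P) (hp0 : 0 ≤ p)
    (hprob : ∀ m, 1 ≤ m → P {ω | ξ m ω = 1} = ENNReal.ofReal p) (n : ℕ) (a b : ℝ) :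
    P[(fun ω => if ξ (n + 2) ω = 1 then a else b) | ladderF ξ hmeas n]
      =ᵐ[P] fun _ => a * p + b * (1 - p) := by
  have hsm : StronglyMeasurable[MeasurableSpace.comap (ξ (n + 2)) inferInstance]
      (fun ω => if ξ (n + 2) ω = 1 then a else b) := by
    have hf : Measurable[MeasurableSpace.comap (ξ (n + 2)) inferInstance] (ξ (n + 2)) :=
      Measurable.of_comap_le le_rfl
    have : (fun ω => if ξ (n + 2) ω = 1 then a else b)
        = (fun z : ℤ => if z = 1 then a else b) ∘ (ξ (n + 2)) := rfl
    rw [this]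
    exact (Measurable.comp measurable_from_top hf).stronglyMeasurable
  have h := condExp_indep_eq (μ := P) ((hmeas (n + 2)).comap_le) ((ladderF ξ hmeas).le n)
    hsm (indep_xi_F ξ hmeas P hindep n)
  rw [integral_two_point ξ p hmeas P hp0 (hprob (n + 2) (by omega)) a b] at h
  exact h

lemma condexp_ladderD (hindep : iIndepFun ξ P)
    (hval : ∀ n ω, ξ n ω = 1 ∨ ξ n ω = -1) (hp0 : 0 ≤ p)
    (hprob : ∀ m, 1 ≤ m → P {ω | ξ m ω = 1} = ENNReal.ofReal p)
    (hp2 : p ^ 2 + 2 * p - 1 = 0) (n : ℕ) :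
    P[ladderD ξ p n | ladderF ξ hmeas n] =ᵐ[P] 0 := by
  set u : Ω → ℝ := fun ω => if ξ (n + 1) ω = 1 then (1 : ℝ) else 0 with hu
  set v : Ω → ℝ := fun ω => if ξ (n + 1) ω = 1 then (0 : ℝ) else 1 with hv
  set g1 : Ω → ℝ := fun ω => if ξ (n + 2) ω = 1 then (2 : ℝ) else -1 - p with hg1
  set g2 : Ω → ℝ := fun ω => if ξ (n + 2) ω = 1 then 1 + p else (-1 : ℝ) with hg2
  have hrw : ladderD ξ p n = (fun ω => u ω * g1 ω) + (fun ω => v ω * g2 ω) := by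
    funext ω
    exact ladderD_eq ξ p hval n ω
  have hint1 : Integrable (fun ω => u ω * g1 ω) P := integrable_ite_mul ξ hmeas P _ _ _ _ _ _
  have hint2 : Integrable (fun ω => v ω * g2 ω) P := integrable_ite_mul ξ hmeas P _ _ _ _ _ _
  have husm : StronglyMeasurable[ladderF ξ hmeas n] u :=
    (Measurable.ite (measurableSet_xi_eq (measurable_xi_F ξ hmeas (by omega) le_rfl) 1)
      measurable_const measurable_const).stronglyMeasurable
  have hvsm : StronglyMeasurable[ladderF ξ hmeas n] v :=
    (Measurable.ite (measurableSet_xi_eq (measurable_xi_F ξ hmeas (by omega) le_rfl) 1)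
      measurable_const measurable_const).stronglyMeasurable
  have hg1int : Integrable g1 P := integrable_ite_xi ξ hmeas P _ _ _
  have hg2int : Integrable g2 P := integrable_ite_xi ξ hmeas P _ _ _
  have h1 : P[ladderD ξ p n | ladderF ξ hmeas n]
      =ᵐ[P] P[(fun ω => u ω * g1 ω) | ladderF ξ hmeas n]
        + P[(fun ω => v ω * g2 ω) | ladderF ξ hmeas n] := by
    rw [hrw]
    exact condExp_add hint1 hint2 _
  have h2 : P[(fun ω => u ω * g1 ω) | ladderF ξ hmeas n]
      =ᵐ[P] fun ω => u ω * (P[g1 | ladderF ξ hmeas n]) ω :=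
    condExp_mul_of_stronglyMeasurable_left husm hint1 hg1int
  have h3 : P[(fun ω => v ω * g2 ω) | ladderF ξ hmeas n]
      =ᵐ[P] fun ω => v ω * (P[g2 | ladderF ξ hmeas n]) ω :=
    condExp_mul_of_stronglyMeasurable_left hvsm hint2 hg2int
  have h4 : P[g1 | ladderF ξ hmeas n] =ᵐ[P] fun _ => 2 * p + (-1 - p) * (1 - p) :=
    condexp_two_point ξ p hmeas P hindep hp0 hprob n 2 (-1 - p)
  have h5 : P[g2 | ladderF ξ hmeas n] =ᵐ[P] fun _ => (1 + p) * p + (-1) * (1 - p) :=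
    condexp_two_point ξ p hmeas P hindep hp0 hprob n (1 + p) (-1)
  have hval1 : 2 * p + (-1 - p) * (1 - p) = 0 := by nlinarith [hp2]
  have hval2 : (1 + p) * p + (-1) * (1 - p) = 0 := by nlinarith [hp2]
  filter_upwards [h1, h2, h3, h4, h5] with ω e1 e2 e3 e4 e5
  rw [Pi.zero_apply, e1, Pi.add_apply, e2, e3, e4, e5, hval1, hval2]
  ring

lemma condexp_stopped_incr (hindep : iIndepFun ξ P)
    (hval : ∀ n ω, ξ n ω = 1 ∨ ξ n ω = -1) (hp0 : 0 ≤ p)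
    (hprob : ∀ m, 1 ≤ m → P {ω | ξ m ω = 1} = ENNReal.ofReal p)
    (hp2 : p ^ 2 + 2 * p - 1 = 0) (n : ℕ) :
    P[(fun ω => if ladderA ξ n ω then ladderD ξ p n ω else 0) | ladderF ξ hmeas n] =ᵐ[P] 0 := by
  set w : Ω → ℝ := fun ω => if ladderA ξ n ω then (1 : ℝ) else 0 with hw
  have hrw : (fun ω => if ladderA ξ n ω then ladderD ξ p n ω else 0)
      = fun ω => w ω * ladderD ξ p n ω := by
    funext ω
    by_cases h : ladderA ξ n ω <;> simp [hw, h]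
  have hwsm : StronglyMeasurable[ladderF ξ hmeas n] w :=
    (Measurable.ite (measurableSet_ladderA_F ξ hmeas n) measurable_const
      measurable_const).stronglyMeasurable
  have hint : Integrable (fun ω => w ω * ladderD ξ p n ω) P := by
    rw [← hrw]
    exact integrable_stopped_incr ξ p hmeas P n
  rw [hrw]
  have h2 := condExp_mul_of_stronglyMeasurable_left hwsm hint (integrable_ladderD ξ p hmeas P n)
  have h3 := condexp_ladderD ξ p hmeas P hindep hval hp0 hprob hp2 n
  refine h2.trans ?_
  filter_upwards [h3] with ω e3
  simp only [Pi.mul_apply, Pi.zero_apply, e3, mul_zero]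

lemma martingale_ladderY (hindep : iIndepFun ξ P)
    (hval : ∀ n ω, ξ n ω = 1 ∨ ξ n ω = -1) (hp0 : 0 ≤ p)
    (hprob : ∀ m, 1 ≤ m → P {ω | ξ m ω = 1} = ENNReal.ofReal p)
    (hp2 : p ^ 2 + 2 * p - 1 = 0) :
    Martingale (ladderY ξ p) (ladderF ξ hmeas) P := by
  refine martingale_nat (fun n => (measurable_ladderY_F ξ p hmeas n).stronglyMeasurable)
    (fun n => integrable_ladderY ξ p hmeas P n) (fun n => ?_)
  have hYsucc : ladderY ξ p (n + 1) = ladderY ξ p n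
      + (fun ω => if ladderA ξ n ω then ladderD ξ p n ω else 0) := by
    funext ω
    simp [ladderY, Finset.sum_range_succ, add_assoc]
  rw [hYsucc]
  have h1 := condExp_add (μ := P) (m := ladderF ξ hmeas n)
    (integrable_ladderY ξ p hmeas P n) (integrable_stopped_incr ξ p hmeas P n)
  have h2 : P[ladderY ξ p n | ladderF ξ hmeas n] = ladderY ξ p n :=
    condExp_of_stronglyMeasurable ((ladderF ξ hmeas).le n)
      (measurable_ladderY_F ξ p hmeas n).stronglyMeasurable (integrable_ladderY ξ p hmeas P n)
  have h3 := condexp_stopped_incr ξ p hmeas P hindep hval hp0 hprob hp2 n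
  refine EventuallyEq.symm (h1.trans ?_)
  filter_upwards [h3] with ω e3
  simp only [Pi.add_apply, h2, e3, Pi.zero_apply, add_zero]

lemma integral_ladderY_eq (hindep : iIndepFun ξ P)
    (hval : ∀ n ω, ξ n ω = 1 ∨ ξ n ω = -1) (hp0 : 0 ≤ p)
    (hprob : ∀ m, 1 ≤ m → P {ω | ξ m ω = 1} = ENNReal.ofReal p)
    (hp2 : p ^ 2 + 2 * p - 1 = 0) (n : ℕ) :
    ∫ ω, ladderY ξ p n ω ∂P = ∫ ω, ladderM ξ p 0 ω ∂P := by
  induction n with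
  | zero => simp [ladderY]
  | succ n ih =>
      have hYsucc : ladderY ξ p (n + 1) = ladderY ξ p n
          + (fun ω => if ladderA ξ n ω then ladderD ξ p n ω else 0) := by
        funext ω
        simp [ladderY, Finset.sum_range_succ, add_assoc]
      rw [hYsucc]
      simp only [Pi.add_apply]
      rw [integral_add (integrable_ladderY ξ p hmeas P n) (integrable_stopped_incr ξ p hmeas P n)]
      have h0 : ∫ ω, (if ladderA ξ n ω then ladderD ξ p n ω else 0) ∂P = 0 := by
        rw [← integral_condExp ((ladderF ξ hmeas).le n)
          (f := fun ω => if ladderA ξ n ω then ladderD ξ p n ω else 0)]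
        rw [integral_congr_ae (condexp_stopped_incr ξ p hmeas P hindep hval hp0 hprob hp2 n)]
        simp
      rw [h0, add_zero, ih]

omit hmeas in
lemma ladderA_antitone {n k : ℕ} {ω : Ω} (h : ladderA ξ n ω) (hk : k ≤ n) : ladderA ξ k ω :=
  fun j hj => h j (hj.trans hk)

omit hmeas in
lemma ladderY_eq_M_of_A {n : ℕ} {ω : Ω} (h : ∀ k < n, ladderA ξ k ω) :
    ladderY ξ p n ω = ladderM ξ p n ω := by
  induction n with
  | zero => simp [ladderY]
  | succ n ih =>
      have hA : ladderA ξ n ω := h n (Nat.lt_succ_self n)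
      have hstep : ladderY ξ p (n + 1) ω = ladderY ξ p n ω + ladderD ξ p n ω := by
        simp [ladderY, Finset.sum_range_succ, hA, add_assoc]
      rw [hstep, ih (fun k hk => h k (hk.trans (Nat.lt_succ_self n)))]
      simp [ladderD]

omit hmeas in
lemma ladderY_struct (n : ℕ) (ω : Ω) :
    ∃ m, m ≤ n ∧ ladderY ξ p n ω = ladderM ξ p m ω ∧ ∀ k < m, ladderA ξ k ω := by
  induction n with
  | zero => exact ⟨0, le_rfl, by simp [ladderY], fun k hk => absurd hk (Nat.not_lt_zero k)⟩
  | succ n ih =>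
      by_cases hA : ladderA ξ n ω
      · refine ⟨n + 1, le_rfl, ?_, ?_⟩
        · exact ladderY_eq_M_of_A ξ p fun k hk =>
            ladderA_antitone ξ hA (Nat.lt_succ_iff.mp hk)
        · exact fun k hk => ladderA_antitone ξ hA (Nat.lt_succ_iff.mp hk)
      · obtain ⟨m, hm, hYM, hks⟩ := ih
        refine ⟨m, hm.trans (Nat.le_succ n), ?_, hks⟩
        have hstep : ladderY ξ p (n + 1) ω = ladderY ξ p n ω := by
          simp [ladderY, Finset.sum_range_succ, hA]
        rw [hstep, hYM]

omit hmeas in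
lemma ladderM_ge (hval : ∀ n ω, ξ n ω = 1 ∨ ξ n ω = -1) (hp0 : 0 ≤ p) {m : ℕ} {ω : Ω}
    (h : ∀ k < m, ladderA ξ k ω) : -1 ≤ ladderM ξ p m ω := by
  cases m with
  | zero =>
      rcases hval 1 ω with h1 | h1
      · simp [ladderM, ladderS_one, h1]
        linarith
      · simp [ladderM, ladderS_one, h1]
  | succ j =>
      have hA : ladderA ξ j ω := h j (Nat.lt_succ_self j)
      have h1 : 1 ≤ ladderS ξ (j + 1) ω := hA j le_rfl
      have hX := ladderX_ge ξ (j + 2) ω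
      have hSS : ladderS ξ (j + 2) ω = ladderS ξ (j + 1) ω + ladderX ξ (j + 2) ω :=
        ladderS_succ ξ (j + 1) ω
      have h2 : (0 : ℤ) ≤ ladderS ξ (j + 2) ω := by omega
      have h2' : (0 : ℝ) ≤ (ladderS ξ (j + 2) ω : ℝ) := by exact_mod_cast h2
      have h3 : (0 : ℝ) ≤ p * (if ξ (j + 2) ω = 1 then (1 : ℝ) else 0) := by
        split_ifs <;> simp [hp0]
      unfold ladderM
      push_cast
      push_cast at h2'
      linarith

omit hmeas in
lemma ladderY_ge (hval : ∀ n ω, ξ n ω = 1 ∨ ξ n ω = -1) (hp0 : 0 ≤ p) (n : ℕ) (ω : Ω) :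
    -1 ≤ ladderY ξ p n ω := by
  obtain ⟨m, _, hYM, hks⟩ := ladderY_struct ξ p n ω
  rw [hYM]
  exact ladderM_ge ξ p hval hp0 hks

omit hmeas in
lemma ladderM_zero_le (hval : ∀ n ω, ξ n ω = 1 ∨ ξ n ω = -1) (hp0 : 0 ≤ p) (hp1 : p ≤ 1)
    (ω : Ω) : ladderM ξ p 0 ω ≤ 2 := by
  rcases hval 1 ω with h1 | h1
  · simp [ladderM, ladderS_one, h1]
    linarith
  · simp [ladderM, ladderS_one, h1]
    linarith

lemma eLpNorm_ladderY_le (hindep : iIndepFun ξ P)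
    (hval : ∀ n ω, ξ n ω = 1 ∨ ξ n ω = -1) (hp0 : 0 ≤ p) (hp1 : p ≤ 1)
    (hprob : ∀ m, 1 ≤ m → P {ω | ξ m ω = 1} = ENNReal.ofReal p)
    (hp2 : p ^ 2 + 2 * p - 1 = 0) (n : ℕ) :
    eLpNorm (ladderY ξ p n) 1 P ≤ ((4 : ℝ≥0) : ℝ≥0∞) := by
  have hint := integrable_ladderY ξ p hmeas P n
  have habs : ∀ ω, |ladderY ξ p n ω| ≤ ladderY ξ p n ω + 2 := by
    intro ω
    have hge := ladderY_ge ξ p hval hp0 n ω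
    rcases abs_cases (ladderY ξ p n ω) with ⟨h, _⟩ | ⟨h, _⟩ <;> linarith
  have hintegral : ∫ ω, |ladderY ξ p n ω| ∂P ≤ 4 := by
    have h1 : ∫ ω, |ladderY ξ p n ω| ∂P ≤ ∫ ω, (ladderY ξ p n ω + 2) ∂P :=
      integral_mono hint.abs (hint.add (integrable_const 2)) habs
    have h2 : ∫ ω, (ladderY ξ p n ω + 2) ∂P = (∫ ω, ladderY ξ p n ω ∂P) + 2 := by
      rw [integral_add hint (integrable_const 2)]
      simp
    have h3 : ∫ ω, ladderY ξ p n ω ∂P ≤ 2 := by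
      rw [integral_ladderY_eq ξ p hmeas P hindep hval hp0 hprob hp2 n]
      calc ∫ ω, ladderM ξ p 0 ω ∂P ≤ ∫ _, (2 : ℝ) ∂P :=
            integral_mono (integrable_ladderM ξ p hmeas P 0) (integrable_const 2)
              (ladderM_zero_le ξ p hval hp0 hp1)
        _ = 2 := by simp
    linarith
  have : eLpNorm (ladderY ξ p n) 1 P = ENNReal.ofReal (∫ ω, ‖ladderY ξ p n ω‖ ∂P) := by
    rw [eLpNorm_one_eq_lintegral_enorm, ← ofReal_integral_norm_eq_lintegral_enorm hint]
  rw [this]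
  calc ENNReal.ofReal (∫ ω, ‖ladderY ξ p n ω‖ ∂P) ≤ ENNReal.ofReal 4 := by
        refine ENNReal.ofReal_le_ofReal ?_
        simpa [Real.norm_eq_abs] using hintegral
    _ = ((4 : ℝ≥0) : ℝ≥0∞) := by norm_num

omit hmeas in
lemma bad_S_pos (hval : ∀ n ω, ξ n ω = 1 ∨ ξ n ω = -1) {ω : Ω} (h1 : ξ 1 ω = 1)
    (h2 : ∀ n, 1 ≤ n → ladderS ξ n ω ≠ 0) : ∀ j, 1 ≤ ladderS ξ (j + 1) ω := by
  intro j
  induction j with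
  | zero => simp [ladderS_one, h1]
  | succ j ih =>
      show 1 ≤ ladderS ξ (j + 2) ω
      have hX := ladderX_ge ξ (j + 2) ω
      have hne := h2 (j + 2) (by omega)
      have hSS : ladderS ξ (j + 2) ω = ladderS ξ (j + 1) ω + ladderX ξ (j + 2) ω :=
        ladderS_succ ξ (j + 1) ω
      omega

lemma bad_null (hindep : iIndepFun ξ P)
    (hval : ∀ n ω, ξ n ω = 1 ∨ ξ n ω = -1) (hp0 : 0 ≤ p) (hp1 : p ≤ 1)
    (hprob : ∀ m, 1 ≤ m → P {ω | ξ m ω = 1} = ENNReal.ofReal p)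
    (hp2 : p ^ 2 + 2 * p - 1 = 0) :
    P {ω | ξ 1 ω = 1 ∧ ∀ n, 1 ≤ n → ladderS ξ n ω ≠ 0} = 0 := by
  have hmart := martingale_ladderY ξ p hmeas P hindep hval hp0 hprob hp2
  have hae := hmart.submartingale.exists_ae_tendsto_of_bdd
    (R := (4 : ℝ≥0)) (eLpNorm_ladderY_le ξ p hmeas P hindep hval hp0 hp1 hprob hp2)
  refine measure_mono_null ?_ (ae_iff.mp hae)
  intro ω hω
  obtain ⟨h1, h2⟩ := hω
  intro hc
  obtain ⟨c, hc⟩ := hc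
  have hSpos := bad_S_pos ξ hval h1 h2
  have hYM : ∀ n, ladderY ξ p n ω = ladderM ξ p n ω := fun n =>
    ladderY_eq_M_of_A ξ p fun k _ => fun j _ => hSpos j
  have hc1 : Tendsto (fun n => ladderY ξ p (n + 1) ω) atTop (nhds c) :=
    hc.comp (tendsto_add_atTop_nat 1)
  have hc2 : Tendsto (fun n => ladderY ξ p (n + 1) ω - ladderY ξ p n ω) atTop (nhds 0) := by
    simpa using hc1.sub hc
  have hev := (Metric.tendsto_nhds.mp hc2) 1 one_pos
  obtain ⟨n, hn⟩ := hev.exists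
  rw [Real.dist_eq, sub_zero] at hn
  have hD : ladderY ξ p (n + 1) ω - ladderY ξ p n ω = ladderD ξ p n ω := by
    rw [hYM, hYM]
    rfl
  rw [hD] at hn
  have := ladderD_abs_ge ξ p hval hp0 n ω
  linarith

end Ladder

/-- If `p = √2 - 1` and `T = inf {n ≥ 1 : S_n = 0}`, then
`P(ξ₁ = 1 and T < ∞) = p`. -/
theorem ladder_return_after_up_step (p : ℝ) (hp : p = Real.sqrt 2 - 1)
    (P : Measure Ω) [IsProbabilityMeasure P]
    (ξ : ℕ → Ω → ℤ) (hmeas : ∀ n, Measurable (ξ n))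
    (hindep : iIndepFun ξ P)
    (hval : ∀ n ω, ξ n ω = 1 ∨ ξ n ω = -1)
    (hprob : ∀ n, 1 ≤ n → P {ω | ξ n ω = 1} = ENNReal.ofReal p) :
    P {ω | ξ 1 ω = 1 ∧ ∃ n, 1 ≤ n ∧ ladderS ξ n ω = 0} = ENNReal.ofReal p := by
  have hs2 : Real.sqrt 2 ^ 2 = 2 := Real.sq_sqrt (by norm_num)
  have hs2' : 0 ≤ Real.sqrt 2 := Real.sqrt_nonneg 2
  have hs2'' : 1 ≤ Real.sqrt 2 := by nlinarith
  have hs2''' : Real.sqrt 2 ≤ 2 := by nlinarith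
  have hp0 : 0 ≤ p := by rw [hp]; linarith
  have hp1 : p ≤ 1 := by rw [hp]; linarith
  have hp2 : p ^ 2 + 2 * p - 1 = 0 := by rw [hp]; nlinarith
  have hBad0 := bad_null ξ p hmeas P hindep hval hp0 hp1 hprob hp2
  have hsub : {ω | ξ 1 ω = 1} ⊆
      {ω | ξ 1 ω = 1 ∧ ∃ n, 1 ≤ n ∧ ladderS ξ n ω = 0}
        ∪ {ω | ξ 1 ω = 1 ∧ ∀ n, 1 ≤ n → ladderS ξ n ω ≠ 0} := by
    intro ω h1
    by_cases h : ∃ n, 1 ≤ n ∧ ladderS ξ n ω = 0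
    · exact Or.inl ⟨h1, h⟩
    · push_neg at h
      exact Or.inr ⟨h1, h⟩
  refine le_antisymm ?_ ?_
  · calc P {ω | ξ 1 ω = 1 ∧ ∃ n, 1 ≤ n ∧ ladderS ξ n ω = 0}
        ≤ P {ω | ξ 1 ω = 1} := measure_mono fun ω h => h.1
      _ = ENNReal.ofReal p := hprob 1 le_rfl
  · calc ENNReal.ofReal p = P {ω | ξ 1 ω = 1} := (hprob 1 le_rfl).symm
      _ ≤ P ({ω | ξ 1 ω = 1 ∧ ∃ n, 1 ≤ n ∧ ladderS ξ n ω = 0}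
            ∪ {ω | ξ 1 ω = 1 ∧ ∀ n, 1 ≤ n → ladderS ξ n ω ≠ 0}) := measure_mono hsub
      _ ≤ P {ω | ξ 1 ω = 1 ∧ ∃ n, 1 ≤ n ∧ ladderS ξ n ω = 0}
            + P {ω | ξ 1 ω = 1 ∧ ∀ n, 1 ≤ n → ladderS ξ n ω ≠ 0} := measure_union_le _ _
      _ = P {ω | ξ 1 ω = 1 ∧ ∃ n, 1 ≤ n ∧ ladderS ξ n ω = 0} := by rw [hBad0, add_zero]

end
end

section
/- Suppose p = √2−1, and let T = inf{n ≥ 1 : S_n = 0}. Then P(ξ_1 = −1 and T < ∞) = q. -/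
open MeasureTheory ProbabilityTheory Filter
open scoped ENNReal Classical

noncomputable section

variable {Ω : Type*} [MeasurableSpace Ω]

namespace LadderAux

/-- one step of the ladder walk carrying (position, last letter). -/
def lstep (c : ℤ × ℤ) (a : ℤ) : ℤ × ℤ :=
  (c.1 + (if a = 1 then (if c.2 = 1 then 2 else 1) else -1), a)

/-- step, frozen outside the active region `A`. -/
def lnext (A : ℤ × ℤ → Prop) (c : ℤ × ℤ) (a : ℤ) : ℤ × ℤ :=
  if A c then lstep c a else c

/-- expected value of `f` of the `A`-stopped walk after `n` steps, start `c`. -/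
def lG (p : ℝ) (A : ℤ × ℤ → Prop) (f : ℤ × ℤ → ℝ) : ℕ → ℤ × ℤ → ℝ
  | 0, c => f c
  | n+1, c => p * lG p A f n (lnext A c 1) + (1-p) * lG p A f n (lnext A c (-1))

/-- the martingale function. -/
def lM (p : ℝ) (c : ℤ × ℤ) : ℝ := (c.1 : ℝ) + (if c.2 = 1 then p else 0)

lemma lnext_snd (A : ℤ × ℤ → Prop) (c : ℤ × ℤ) (a : ℤ)
    (hc : c.2 = 1 ∨ c.2 = -1) (ha : a = 1 ∨ a = -1) :
    (lnext A c a).2 = 1 ∨ (lnext A c a).2 = -1 := by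
  unfold lnext lstep
  split <;> simp [hc, ha]

lemma onestep {p : ℝ} (halg : p^2 + 2*p = 1) (c : ℤ × ℤ) (hc : c.2 = 1 ∨ c.2 = -1) :
    p * lM p (lstep c 1) + (1-p) * lM p (lstep c (-1)) = lM p c := by
  rcases hc with hc | hc <;>
  · simp [lM, lstep, hc]
    push_cast
    nlinarith [halg]

lemma lG_mart {p : ℝ} (halg : p^2 + 2*p = 1) (A : ℤ × ℤ → Prop) :
    ∀ n c, (c.2 = 1 ∨ c.2 = -1) → lG p A (lM p) n c = lM p c := by
  intro n
  induction n with
  | zero => intro c _; rfl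
  | succ n ih =>
    intro c hc
    show p * lG p A (lM p) n (lnext A c 1) + (1-p) * lG p A (lM p) n (lnext A c (-1)) = lM p c
    rw [ih _ (lnext_snd A c 1 hc (Or.inl rfl)), ih _ (lnext_snd A c (-1) hc (Or.inr rfl))]
    unfold lnext
    split
    · exact onestep halg c hc
    · ring

lemma lG_mono {p : ℝ} (hp0 : 0 ≤ p) (hp1 : p ≤ 1) (A : ℤ × ℤ → Prop)
    {f g : ℤ × ℤ → ℝ} (h : ∀ c, f c ≤ g c) :
    ∀ n c, lG p A f n c ≤ lG p A g n c := by
  intro n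
  induction n with
  | zero => exact h
  | succ n ih =>
    intro c
    show p * lG p A f n _ + (1-p) * lG p A f n _ ≤ p * lG p A g n _ + (1-p) * lG p A g n _
    have := ih (lnext A c 1); have := ih (lnext A c (-1))
    nlinarith

lemma lG_smul {p : ℝ} (A : ℤ × ℤ → Prop) (b : ℝ) (f : ℤ × ℤ → ℝ) :
    ∀ n c, lG p A (fun c => b * f c) n c = b * lG p A f n c := by
  intro n
  induction n with
  | zero => intro c; rfl
  | succ n ih =>
    intro c
    show p * lG p A _ n _ + (1-p) * lG p A _ n _ = _
    rw [ih, ih]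
    show _ = b * (p * lG p A f n _ + (1-p) * lG p A f n _)
    ring

lemma lG_const {p : ℝ} (A : ℤ × ℤ → Prop) (b : ℝ) :
    ∀ n c, lG p A (fun _ => b) n c = b := by
  intro n
  induction n with
  | zero => intro c; rfl
  | succ n ih =>
    intro c
    show p * lG p A _ n _ + (1-p) * lG p A _ n _ = b
    rw [ih, ih]; ring

lemma lG_nonneg {p : ℝ} (hp0 : 0 ≤ p) (hp1 : p ≤ 1) (A : ℤ × ℤ → Prop)
    {f : ℤ × ℤ → ℝ} (h : ∀ c, 0 ≤ f c) (n : ℕ) (c : ℤ × ℤ) : 0 ≤ lG p A f n c := by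
  have := lG_mono hp0 hp1 A (f := fun _ => 0) (g := f) h n c
  rwa [lG_const] at this

lemma lG_le_one {p : ℝ} (hp0 : 0 ≤ p) (hp1 : p ≤ 1) (A : ℤ × ℤ → Prop)
    {f : ℤ × ℤ → ℝ} (h : ∀ c, f c ≤ 1) (n : ℕ) (c : ℤ × ℤ) : lG p A f n c ≤ 1 := by
  have := lG_mono hp0 hp1 A (f := f) (g := fun _ => 1) h n c
  rwa [lG_const] at this

lemma lG_frozen {p : ℝ} (A : ℤ × ℤ → Prop) (f : ℤ × ℤ → ℝ) {c : ℤ × ℤ} (hc : ¬ A c) :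
    ∀ n, lG p A f n c = f c := by
  intro n
  induction n with
  | zero => rfl
  | succ n ih =>
    show p * lG p A f n (lnext A c 1) + (1-p) * lG p A f n (lnext A c (-1)) = f c
    rw [lnext, if_neg hc, lnext, if_neg hc, ih]; ring

lemma lG_add {p : ℝ} (A : ℤ × ℤ → Prop) (f : ℤ × ℤ → ℝ) (b : ℕ) :
    ∀ a c, lG p A f (a + b) c = lG p A (fun c' => lG p A f b c') a c := by
  intro a
  induction a with
  | zero => intro c; rw [Nat.zero_add]; rfl
  | succ a ih =>
    intro c
    have h : a + 1 + b = (a + b) + 1 := by omega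
    rw [h]
    show p * lG p A f (a+b) _ + (1-p) * lG p A f (a+b) _ = _
    show _ = p * lG p A (fun c' => lG p A f b c') a _ + (1-p) * lG p A (fun c' => lG p A f b c') a _
    rw [ih, ih]

/-- indicator of the active region -/
def fA (A : ℤ × ℤ → Prop) (c : ℤ × ℤ) : ℝ := if A c then 1 else 0

/-- escape from a window of width `L` within `L` steps has probability ≥ (1-p)^L. -/
lemma lG_window {p : ℝ} (hp0 : 0 ≤ p) (hp1 : p ≤ 1) (A : ℤ × ℤ → Prop) (lo : ℤ)
    (hlo : ∀ c, A c → lo < c.1) :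
    ∀ (j : ℕ) (c : ℤ × ℤ), (A c → c.1 < lo + j) → lG p A (fA A) j c ≤ 1 - (1-p)^j := by
  intro j
  induction j with
  | zero =>
    intro c hc
    by_cases h : A c
    · have h1 := hlo c h
      exact absurd (hc h) (by push_cast; omega)
    · simp [lG, fA, h]
  | succ j ih =>
    intro c hc
    by_cases h : A c
    · show p * lG p A (fA A) j (lnext A c 1) + (1-p) * lG p A (fA A) j (lnext A c (-1)) ≤ _
      have h1 : lG p A (fA A) j (lnext A c 1) ≤ 1 :=
        lG_le_one hp0 hp1 A (fun c => by unfold fA; split <;> norm_num) j _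
      have h2 : lG p A (fA A) j (lnext A c (-1)) ≤ 1 - (1-p)^j := by
        apply ih
        intro hA
        have h4 := hc h
        rw [lnext, if_pos h]
        simp only [lstep]
        norm_num
        push_cast at h4 ⊢
        omega
      have hq : (0:ℝ) ≤ (1-p)^j := pow_nonneg (by linarith) j
      have e : (1-p)^(j+1) = (1-p) * (1-p)^j := by rw [pow_succ]; ring
      have t1 : p * lG p A (fA A) j (lnext A c 1) ≤ p * 1 :=
        mul_le_mul_of_nonneg_left h1 hp0
      have t2 : (1-p) * lG p A (fA A) j (lnext A c (-1)) ≤ (1-p) * (1 - (1-p)^j) :=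
        mul_le_mul_of_nonneg_left h2 (by linarith)
      nlinarith
    · rw [lG_frozen A _ h]
      have : fA A c = 0 := by simp [fA, h]
      rw [this]
      have : (1-p)^(j+1) ≤ 1 := by
        apply pow_le_one₀ <;> linarith
      linarith

lemma lG_window_decay {p : ℝ} (hp0 : 0 ≤ p) (hp1 : p ≤ 1) (A : ℤ × ℤ → Prop) (lo : ℤ) (L : ℕ)
    (hlo : ∀ c, A c → lo < c.1 ∧ c.1 < lo + L) :
    ∀ (k : ℕ) (c : ℤ × ℤ), lG p A (fA A) (L * k) c ≤ (1 - (1-p)^L)^k := by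
  have base : ∀ c, lG p A (fA A) L c ≤ 1 - (1-p)^L :=
    fun c => lG_window hp0 hp1 A lo (fun c h => (hlo c h).1) L c (fun h => (hlo c h).2)
  intro k
  induction k with
  | zero =>
    intro c
    show fA A c ≤ 1
    unfold fA; split <;> norm_num
  | succ k ih =>
    intro c
    have hL : L * (k+1) = L + L * k := by ring
    rw [hL, lG_add]
    set B : ℝ := (1 - (1-p)^L)^k with hB
    have hB0 : 0 ≤ B := by
      apply pow_nonneg
      have : (1-p)^L ≤ 1 := pow_le_one₀ (by linarith) (by linarith)
      linarith
    have hpt : ∀ c', lG p A (fA A) (L * k) c' ≤ B * fA A c' := by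
      intro c'
      by_cases h : A c'
      · have := ih c'
        simp [fA, h]
        linarith
      · rw [lG_frozen A _ h]
        simp [fA, h]
    calc lG p A (fun c' => lG p A (fA A) (L * k) c') L c
        ≤ lG p A (fun c' => B * fA A c') L c := lG_mono hp0 hp1 A hpt L c
      _ = B * lG p A (fA A) L c := lG_smul A B (fA A) L c
      _ ≤ B * (1 - (1-p)^L) := mul_le_mul_of_nonneg_left (base c) hB0
      _ = (1 - (1-p)^L)^(k+1) := by rw [pow_succ]


/-- bottom-exit bound: exiting `(-N,0)` through the bottom before reaching `≥ 0`
has probability at most `(2+p)/(N+1-p)`. -/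
lemma lG_bot {p : ℝ} (hp0 : 0 ≤ p) (hp1 : p ≤ 1) (halg : p^2 + 2*p = 1) (N : ℕ) (hN : 1 ≤ N) :
    ∀ (n : ℕ) (c : ℤ × ℤ), -(N:ℤ) ≤ c.1 → c.1 ≤ 1 → (c.2 = 1 ∨ c.2 = -1) →
      ((N:ℝ) + 1 - p) * lG p (fun c => -(N:ℤ) < c.1 ∧ c.1 < 0)
        (fun c => if c.1 ≤ -(N:ℤ) then 1 else 0) n c ≤ (1 + p) - lM p c := by
  set A : ℤ × ℤ → Prop := fun c => -(N:ℤ) < c.1 ∧ c.1 < 0 with hA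
  set f : ℤ × ℤ → ℝ := fun c => if c.1 ≤ -(N:ℤ) then 1 else 0 with hf
  intro n
  induction n with
  | zero =>
    intro c h1 h2 h3
    show ((N:ℝ) + 1 - p) * f c ≤ (1 + p) - lM p c
    have hM1 : lM p c ≤ (c.1 : ℝ) + p := by
      unfold lM; split <;> simp <;> linarith
    by_cases hb : c.1 ≤ -(N:ℤ)
    · have hceq : c.1 = -(N:ℤ) := le_antisymm hb h1
      have : lM p c ≤ -(N:ℝ) + p := by
        rw [hceq] at hM1; push_cast at hM1; linarith
      simp only [hf, if_pos hb]
      linarith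
    · simp only [hf, if_neg hb]
      have : (c.1 : ℝ) ≤ 1 := by exact_mod_cast h2
      linarith
  | succ n ih =>
    intro c h1 h2 h3
    show ((N:ℝ) + 1 - p) * (p * lG p A f n (lnext A c 1) + (1-p) * lG p A f n (lnext A c (-1)))
      ≤ (1 + p) - lM p c
    by_cases h : A c
    · rw [hA] at h
      have hs1 : lnext A c 1 = lstep c 1 := by rw [lnext, if_pos]; rwa [hA]
      have hs2 : lnext A c (-1) = lstep c (-1) := by rw [lnext, if_pos]; rwa [hA]
      have e1 : (lstep c 1).1 = c.1 + (if c.2 = 1 then 2 else 1) := by simp [lstep]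
      have i1 := ih (lstep c 1) (by rw [e1]; split <;> omega) (by rw [e1]; split <;> omega)
        (by simp [lstep])
      have e2 : (lstep c (-1)).1 = c.1 - 1 := by simp [lstep]; omega
      have i2 := ih (lstep c (-1)) (by omega) (by omega) (by simp [lstep])
      rw [hs1, hs2]
      have hone := onestep halg c h3
      have hfnn : ∀ c : ℤ × ℤ, 0 ≤ f c := fun c => by
        show (0:ℝ) ≤ if c.1 ≤ -(N:ℤ) then 1 else 0
        split <;> norm_num
      nlinarith [lG_nonneg hp0 hp1 A (f := f) hfnn n (lstep c 1),
        lG_nonneg hp0 hp1 A (f := f) hfnn n (lstep c (-1))]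
    · have hs1 : lnext A c 1 = c := by rw [lnext, if_neg h]
      have hs2 : lnext A c (-1) = c := by rw [lnext, if_neg h]
      rw [hs1, hs2]
      have := ih c h1 h2 h3
      nlinarith


/-- top-exit bound: from `(1,1)`, exiting `(0,K)` through the top
has probability at most `(1+p)/K`. -/
lemma lG_top {p : ℝ} (hp0 : 0 ≤ p) (hp1 : p ≤ 1) (halg : p^2 + 2*p = 1) (K : ℕ) :
    ∀ (n : ℕ) (c : ℤ × ℤ), 0 ≤ c.1 → c.1 ≤ (K:ℤ) + 1 → (c.2 = 1 ∨ c.2 = -1) →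
      (K:ℝ) * lG p (fun c => 0 < c.1 ∧ c.1 < (K:ℤ))
        (fun c => if (K:ℤ) ≤ c.1 then 1 else 0) n c ≤ lM p c := by
  set A : ℤ × ℤ → Prop := fun c => 0 < c.1 ∧ c.1 < (K:ℤ) with hA
  set f : ℤ × ℤ → ℝ := fun c => if (K:ℤ) ≤ c.1 then 1 else 0 with hf
  intro n
  induction n with
  | zero =>
    intro c h1 h2 h3
    show (K:ℝ) * f c ≤ lM p c
    have hM1 : (c.1 : ℝ) ≤ lM p c := by
      unfold lM; split <;> simp <;> linarith
    by_cases hb : (K:ℤ) ≤ c.1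
    · have : (K:ℝ) ≤ (c.1:ℝ) := by exact_mod_cast hb
      simp only [hf, if_pos hb]
      linarith
    · simp only [hf, if_neg hb]
      have : (0:ℝ) ≤ (c.1:ℝ) := by exact_mod_cast h1
      linarith
  | succ n ih =>
    intro c h1 h2 h3
    show (K:ℝ) * (p * lG p A f n (lnext A c 1) + (1-p) * lG p A f n (lnext A c (-1)))
      ≤ lM p c
    by_cases h : A c
    · rw [hA] at h
      have hs1 : lnext A c 1 = lstep c 1 := by rw [lnext, if_pos]; rwa [hA]
      have hs2 : lnext A c (-1) = lstep c (-1) := by rw [lnext, if_pos]; rwa [hA]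
      have e1 : (lstep c 1).1 = c.1 + (if c.2 = 1 then 2 else 1) := by simp [lstep]
      have i1 := ih (lstep c 1) (by rw [e1]; split <;> omega) (by rw [e1]; split <;> omega)
        (by simp [lstep])
      have e2 : (lstep c (-1)).1 = c.1 - 1 := by simp [lstep]; omega
      have i2 := ih (lstep c (-1)) (by omega) (by omega) (by simp [lstep])
      rw [hs1, hs2]
      have hone := onestep halg c h3
      have hfnn : ∀ c : ℤ × ℤ, 0 ≤ f c := fun c => by
        show (0:ℝ) ≤ if (K:ℤ) ≤ c.1 then 1 else 0
        split <;> norm_num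
      nlinarith [lG_nonneg hp0 hp1 A (f := f) hfnn n (lstep c 1),
        lG_nonneg hp0 hp1 A (f := f) hfnn n (lstep c (-1))]
    · have hs1 : lnext A c 1 = c := by rw [lnext, if_neg h]
      have hs2 : lnext A c (-1) = c := by rw [lnext, if_neg h]
      rw [hs1, hs2]
      have := ih c h1 h2 h3
      nlinarith


variable {Ω : Type*} [MeasurableSpace Ω]

/-- the stopped walk driven by `ξ (m+1), ..., ξ (m+n)`. -/
def lwalk (A : ℤ × ℤ → Prop) (ξ : ℕ → Ω → ℤ) : ℕ → ℕ → ℤ × ℤ → Ω → ℤ × ℤ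
  | 0, _, c, _ => c
  | n+1, m, c, ω => lwalk A ξ n (m+1) (lnext A c (ξ (m+1) ω)) ω

/-- real-valued indicator -/
def indic (B : Set (ℤ × ℤ)) (c : ℤ × ℤ) : ℝ := if c ∈ B then 1 else 0

lemma lwalk_snoc (A : ℤ × ℤ → Prop) (ξ : ℕ → Ω → ℤ) :
    ∀ n m c ω, lwalk A ξ (n+1) m c ω = lnext A (lwalk A ξ n m c ω) (ξ (m+n+1) ω) := by
  intro n
  induction n with
  | zero => intro m c ω; rfl
  | succ n ih =>
    intro m c ω
    show lwalk A ξ (n+1) (m+1) (lnext A c (ξ (m+1) ω)) ω = _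
    rw [ih]
    have : m + 1 + n + 1 = m + (n+1) + 1 := by omega
    rw [this]
    rfl

lemma lwalk_add (A : ℤ × ℤ → Prop) (ξ : ℕ → Ω → ℤ) (b : ℕ) :
    ∀ a m c ω, lwalk A ξ (a + b) m c ω = lwalk A ξ b (m + a) (lwalk A ξ a m c ω) ω := by
  intro a
  induction a with
  | zero =>
    intro m c ω
    rw [Nat.zero_add, Nat.add_zero]
    rfl
  | succ a ih =>
    intro m c ω
    have h : a + 1 + b = (a + b) + 1 := by omega
    rw [h]
    show lwalk A ξ (a+b) (m+1) (lnext A c (ξ (m+1) ω)) ω =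
      lwalk A ξ b (m+(a+1)) (lwalk A ξ a (m+1) (lnext A c (ξ (m+1) ω)) ω) ω
    rw [ih]
    have h2 : m + 1 + a = m + (a+1) := by omega
    rw [h2]

lemma lwalk_mem_measurableSet (A : ℤ × ℤ → Prop) (ξ : ℕ → Ω → ℤ)
    (hval : ∀ n ω, ξ n ω = 1 ∨ ξ n ω = -1) :
    ∀ (n m : ℕ) (c : ℤ × ℤ) (B : Set (ℤ × ℤ)),
      MeasurableSet[⨆ i ∈ Set.Icc (m+1) (m+n), MeasurableSpace.comap (ξ i) inferInstance]
        {ω | lwalk A ξ n m c ω ∈ B} := by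
  intro n
  induction n with
  | zero =>
    intro m c B
    by_cases h : c ∈ B
    · have : {ω : Ω | lwalk A ξ 0 m c ω ∈ B} = Set.univ := by
        ext ω; simp [lwalk, h]
      rw [this]
      exact @MeasurableSet.univ Ω (⨆ i ∈ Set.Icc (m+1) (m+0),
        MeasurableSpace.comap (ξ i) inferInstance)
    · have : {ω : Ω | lwalk A ξ 0 m c ω ∈ B} = ∅ := by
        ext ω; simp [lwalk, h]
      rw [this]
      exact @MeasurableSet.empty Ω (⨆ i ∈ Set.Icc (m+1) (m+0),
        MeasurableSpace.comap (ξ i) inferInstance)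
  | succ n ih =>
    intro m c B
    have hdecomp : {ω : Ω | lwalk A ξ (n+1) m c ω ∈ B} =
        ({ω | ξ (m+1) ω = 1} ∩ {ω | lwalk A ξ n (m+1) (lnext A c 1) ω ∈ B}) ∪
        ({ω | ξ (m+1) ω = -1} ∩ {ω | lwalk A ξ n (m+1) (lnext A c (-1)) ω ∈ B}) := by
      ext ω
      show lwalk A ξ n (m+1) (lnext A c (ξ (m+1) ω)) ω ∈ B ↔ _
      simp only [Set.mem_union, Set.mem_inter_iff, Set.mem_setOf_eq]
      rcases hval (m+1) ω with hv | hv <;> rw [hv] <;> norm_num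
    rw [hdecomp]
    set 𝔪 := ⨆ i ∈ Set.Icc (m+1) (m+(n+1)), MeasurableSpace.comap (ξ i)
      (inferInstance : MeasurableSpace ℤ) with h𝔪
    have hsingle : ∀ (v : ℤ), MeasurableSet[𝔪] {ω | ξ (m+1) ω = v} := by
      intro v
      have h1 : MeasurableSet[MeasurableSpace.comap (ξ (m+1)) inferInstance]
          {ω | ξ (m+1) ω = v} :=
        ⟨{v}, MeasurableSet.singleton v, by ext ω; simp⟩
      have hle : MeasurableSpace.comap (ξ (m+1)) inferInstance ≤ 𝔪 := by
        rw [h𝔪]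
        exact le_biSup (fun i => MeasurableSpace.comap (ξ i)
          (inferInstance : MeasurableSpace ℤ)) (Set.mem_Icc.2 (by omega))
      exact hle _ h1
    have hrest : ∀ c', MeasurableSet[𝔪] {ω | lwalk A ξ n (m+1) c' ω ∈ B} := by
      intro c'
      have h1 := ih (m+1) c' B
      have hle : (⨆ i ∈ Set.Icc (m+1+1) (m+1+n), MeasurableSpace.comap (ξ i)
          (inferInstance : MeasurableSpace ℤ)) ≤ 𝔪 := by
        rw [h𝔪]
        exact biSup_mono (fun i hi => by simp [Set.mem_Icc] at hi ⊢; omega)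
      exact hle _ h1
    exact ((hsingle 1).inter (hrest _)).union ((hsingle (-1)).inter (hrest _))

lemma lwalk_measurableSet (A : ℤ × ℤ → Prop) (ξ : ℕ → Ω → ℤ)
    (hmeas : ∀ n, Measurable (ξ n))
    (hval : ∀ n ω, ξ n ω = 1 ∨ ξ n ω = -1) (n m : ℕ) (c : ℤ × ℤ) (B : Set (ℤ × ℤ)) :
    MeasurableSet {ω | lwalk A ξ n m c ω ∈ B} := by
  have h := lwalk_mem_measurableSet A ξ hval n m c B
  have hle : (⨆ i ∈ Set.Icc (m+1) (m+n), MeasurableSpace.comap (ξ i)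
      (inferInstance : MeasurableSpace ℤ)) ≤ (inferInstance : MeasurableSpace Ω) := by
    apply iSup₂_le
    intro i _
    exact (hmeas i).comap_le
  exact hle _ h

/-- The bridge: probabilities of stopped-walk events are computed by `lG`. -/
lemma bridge {p : ℝ} (hp0 : 0 ≤ p) (hp1 : p ≤ 1)
    (P : Measure Ω) [IsProbabilityMeasure P] (ξ : ℕ → Ω → ℤ)
    (hmeas : ∀ n, Measurable (ξ n))
    (hindep : iIndepFun ξ P)
    (hval : ∀ n ω, ξ n ω = 1 ∨ ξ n ω = -1)
    (hprob : ∀ n, 1 ≤ n → P {ω | ξ n ω = 1} = ENNReal.ofReal p)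
    (A : ℤ × ℤ → Prop) :
    ∀ (n m : ℕ) (c : ℤ × ℤ) (B : Set (ℤ × ℤ)),
      P {ω | lwalk A ξ n m c ω ∈ B} = ENNReal.ofReal (lG p A (indic B) n c) := by
  have hprob' : ∀ n, 1 ≤ n → P {ω | ξ n ω = -1} = ENNReal.ofReal (1-p) := by
    intro n hn
    have hc : {ω | ξ n ω = -1} = {ω | ξ n ω = 1}ᶜ := by
      ext ω
      rcases hval n ω with hv | hv <;> simp [hv]
    have hms : MeasurableSet {ω | ξ n ω = 1} := by
      have : {ω | ξ n ω = 1} = ξ n ⁻¹' {1} := by ext ω; simp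
      rw [this]; exact (hmeas n) (MeasurableSet.singleton 1)
    rw [hc, prob_compl_eq_one_sub hms, hprob n hn,
      ENNReal.ofReal_sub _ hp0, ENNReal.ofReal_one]
  intro n
  induction n with
  | zero =>
    intro m c B
    by_cases h : c ∈ B
    · have : {ω : Ω | lwalk A ξ 0 m c ω ∈ B} = Set.univ := by ext ω; simp [lwalk, h]
      rw [this]
      show P Set.univ = ENNReal.ofReal (indic B c)
      simp [indic, h]
    · have : {ω : Ω | lwalk A ξ 0 m c ω ∈ B} = ∅ := by ext ω; simp [lwalk, h]
      rw [this]
      show P ∅ = ENNReal.ofReal (indic B c)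
      simp [indic, h]
  | succ n ih =>
    intro m c B
    have hdecomp : {ω : Ω | lwalk A ξ (n+1) m c ω ∈ B} =
        ({ω | ξ (m+1) ω = 1} ∩ {ω | lwalk A ξ n (m+1) (lnext A c 1) ω ∈ B}) ∪
        ({ω | ξ (m+1) ω = -1} ∩ {ω | lwalk A ξ n (m+1) (lnext A c (-1)) ω ∈ B}) := by
      ext ω
      show lwalk A ξ n (m+1) (lnext A c (ξ (m+1) ω)) ω ∈ B ↔ _
      simp only [Set.mem_union, Set.mem_inter_iff, Set.mem_setOf_eq]
      rcases hval (m+1) ω with hv | hv <;> rw [hv] <;> norm_num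
    -- independence of the first letter from the rest
    have hfact : ∀ (v : ℤ) (c' : ℤ × ℤ),
        P ({ω | ξ (m+1) ω = v} ∩ {ω | lwalk A ξ n (m+1) c' ω ∈ B}) =
        P {ω | ξ (m+1) ω = v} * P {ω | lwalk A ξ n (m+1) c' ω ∈ B} := by
      intro v c'
      have hdisj : Disjoint ({m+1} : Set ℕ) (Set.Icc (m+2) (m+1+n)) := by
        rw [Set.disjoint_left]
        intro i hi hi2
        simp at hi
        simp [Set.mem_Icc] at hi2
        omega
      have hIndep := indep_iSup_of_disjoint
        (fun i => (hmeas i).comap_le) hindep.iIndep hdisj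
      rw [Indep_iff] at hIndep
      apply hIndep
      · have h1 : MeasurableSet[MeasurableSpace.comap (ξ (m+1)) inferInstance]
            {ω | ξ (m+1) ω = v} :=
          ⟨{v}, MeasurableSet.singleton v, by ext ω; simp⟩
        have hle : MeasurableSpace.comap (ξ (m+1)) inferInstance
            ≤ ⨆ i ∈ ({m+1} : Set ℕ), MeasurableSpace.comap (ξ i)
              (inferInstance : MeasurableSpace ℤ) :=
          le_biSup (fun i => MeasurableSpace.comap (ξ i)
            (inferInstance : MeasurableSpace ℤ)) (Set.mem_singleton (m+1))
        exact hle _ h1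
      · have h1 := lwalk_mem_measurableSet A ξ hval n (m+1) c' B
        have he : m + 1 + 1 = m + 2 := by omega
        rw [he] at h1
        exact h1
    have hd : Disjoint ({ω | ξ (m+1) ω = 1} ∩ {ω | lwalk A ξ n (m+1) (lnext A c 1) ω ∈ B})
        ({ω | ξ (m+1) ω = -1} ∩ {ω | lwalk A ξ n (m+1) (lnext A c (-1)) ω ∈ B}) := by
      rw [Set.disjoint_left]
      rintro ω ⟨h1, -⟩ ⟨h2, -⟩
      simp only [Set.mem_setOf_eq] at h1 h2
      rw [h1] at h2
      exact absurd h2 (by decide)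
    have hm2 : MeasurableSet ({ω | ξ (m+1) ω = -1}
        ∩ {ω | lwalk A ξ n (m+1) (lnext A c (-1)) ω ∈ B}) := by
      apply MeasurableSet.inter
      · have : {ω | ξ (m+1) ω = -1} = ξ (m+1) ⁻¹' {-1} := by ext ω; simp
        rw [this]; exact (hmeas (m+1)) (MeasurableSet.singleton _)
      · exact lwalk_measurableSet A ξ hmeas hval n (m+1) _ B
    rw [hdecomp, measure_union hd hm2, hfact 1 _, hfact (-1) _, ih, ih,
      hprob (m+1) (by omega), hprob' (m+1) (by omega)]
    have hnn : ∀ c', 0 ≤ lG p A (indic B) n c' :=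
      lG_nonneg hp0 hp1 A (fun c' => by unfold indic; split <;> norm_num) n
    rw [← ENNReal.ofReal_mul hp0, ← ENNReal.ofReal_mul (by linarith),
      ← ENNReal.ofReal_add (by nlinarith [hnn (lnext A c 1)]) (by nlinarith [hnn (lnext A c (-1))])]
    rfl


def Atriv : ℤ × ℤ → Prop := fun _ => True

section Walk

variable (ξ : ℕ → Ω → ℤ)

lemma hX_eq (hval : ∀ n ω, ξ n ω = 1 ∨ ξ n ω = -1) (n : ℕ) (ω : Ω) : ladderX ξ (n+1) ω =
    (if ξ (n+1) ω = 1 then (if (if n = 0 then (-1:ℤ) else ξ n ω) = 1 then 2 else 1) else -1) := by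
  by_cases hn : n = 0
  · subst hn
    show ladderX ξ 1 ω = _
    unfold ladderX
    rcases hval 1 ω with h | h <;> norm_num [h]
  · unfold ladderX
    have h1 : n + 1 ≠ 1 := by omega
    rcases hval (n+1) ω with h | h <;> simp [h, h1, hn] <;> norm_num

lemma hlad_eq (n : ℕ) (ω : Ω) :
    ladderS ξ (n+1) ω = ladderS ξ n ω + ladderX ξ (n+1) ω := by
  unfold ladderS
  rw [Finset.sum_Icc_succ_top (by omega)]

lemma hS1_eq (hval : ∀ n ω, ξ n ω = 1 ∨ ξ n ω = -1) (ω : Ω) (h : ξ 1 ω = -1) : ladderS ξ 1 ω = -1 := by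
  have := hlad_eq ξ 0 ω
  have h0 : ladderS ξ 0 ω = 0 := by
    unfold ladderS
    rw [Finset.Icc_eq_empty (by omega), Finset.sum_empty]
  rw [this, h0, hX_eq ξ hval 0 ω]
  norm_num [h]

lemma hW_eq (hval : ∀ n ω, ξ n ω = 1 ∨ ξ n ω = -1) : ∀ (n : ℕ) (ω : Ω), lwalk Atriv ξ n 0 ((0:ℤ), (-1:ℤ)) ω
    = (ladderS ξ n ω, if n = 0 then -1 else ξ n ω) := by
  intro n
  induction n with
  | zero =>
    intro ω
    show ((0:ℤ), (-1:ℤ)) = _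
    have h0 : ladderS ξ 0 ω = 0 := by
      unfold ladderS
      rw [Finset.Icc_eq_empty (by omega), Finset.sum_empty]
    rw [h0]
    norm_num
  | succ n ih =>
    intro ω
    rw [lwalk_snoc, ih]
    have e : 0 + n + 1 = n + 1 := by omega
    rw [e]
    unfold lnext
    rw [if_pos (show Atriv _ from trivial)]
    unfold lstep
    have h1 : n + 1 ≠ 0 := by omega
    rw [if_neg h1]
    refine Prod.ext ?_ rfl
    show ladderS ξ n ω + _ = ladderS ξ (n+1) ω
    rw [hlad_eq, hX_eq ξ hval n ω]

lemma hstep_facts (hval : ∀ n ω, ξ n ω = 1 ∨ ξ n ω = -1) (n : ℕ) (ω : Ω) :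
    ladderS ξ (n+1) ω = ladderS ξ n ω + ladderX ξ (n+1) ω ∧
    (-1 ≤ ladderX ξ (n+1) ω ∧ ladderX ξ (n+1) ω ≤ 2) ∧
    (ξ (n+1) ω = -1 → ladderX ξ (n+1) ω = -1) ∧
    (ξ (n+1) ω = 1 → 1 ≤ ladderX ξ (n+1) ω) := by
  refine ⟨hlad_eq ξ n ω, ?_, ?_, ?_⟩ <;> rw [hX_eq ξ hval n ω]
  · rcases hval (n+1) ω with h | h <;> simp [h] <;> split <;> (try split) <;> norm_num
  · intro h; rw [h]; norm_num
  · intro h; rw [h]; norm_num; split <;> (try split) <;> norm_num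

end Walk


lemma le_ofReal_of_forall (x : ℝ≥0∞) (y : ℝ)
    (h : ∀ ε : ℝ, 0 < ε → x ≤ ENNReal.ofReal y + ENNReal.ofReal ε) : x ≤ ENNReal.ofReal y := by
  apply ENNReal.le_of_forall_pos_le_add
  intro ε hε _
  calc x ≤ ENNReal.ofReal y + ENNReal.ofReal (ε:ℝ) := h ε (by exact_mod_cast hε)
    _ = ENNReal.ofReal y + (ε : ℝ≥0∞) := by rw [ENNReal.ofReal_coe_nnreal]

lemma PBneg_zero {p : ℝ} (hp0 : 0 ≤ p) (hp1 : p < 1) (halg : p^2 + 2*p = 1)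
    (P : Measure Ω) [IsProbabilityMeasure P] (ξ : ℕ → Ω → ℤ)
    (hmeas : ∀ n, Measurable (ξ n))
    (hindep : iIndepFun ξ P)
    (hval : ∀ n ω, ξ n ω = 1 ∨ ξ n ω = -1)
    (hprob : ∀ n, 1 ≤ n → P {ω | ξ n ω = 1} = ENNReal.ofReal p) :
    P {ω | ξ 1 ω = -1 ∧ ∀ n, 1 ≤ n → ladderS ξ n ω < 0} = 0 := by
  have hp1' : p ≤ 1 := hp1.le
  set Bneg := {ω | ξ 1 ω = -1 ∧ ∀ n, 1 ≤ n → ladderS ξ n ω < 0} with hBneg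
  have key : ∀ N : ℕ, 1 ≤ N → ∀ k : ℕ,
      P Bneg ≤ ENNReal.ofReal ((1-(1-p)^N)^k) + ENNReal.ofReal ((2+p)/((N:ℝ)+1-p)) := by
    intro N hN k
    set A : ℤ × ℤ → Prop := fun c => -(N:ℤ) < c.1 ∧ c.1 < 0 with hA
    set j := N * k with hj
    have hincl : Bneg ⊆ {ω | lwalk A ξ j 1 ((-1:ℤ),(-1:ℤ)) ω ∈ {c : ℤ×ℤ | A c}}
        ∪ {ω | lwalk A ξ j 1 ((-1:ℤ),(-1:ℤ)) ω ∈ {c : ℤ×ℤ | c.1 ≤ -(N:ℤ)}} := by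
      intro ω hω
      obtain ⟨hξ1, hS⟩ := hω
      have ht : ∀ i, lwalk Atriv ξ i 1 ((-1:ℤ),(-1:ℤ)) ω
          = (ladderS ξ (1+i) ω, if 1+i = 0 then -1 else ξ (1+i) ω) := by
        intro i
        have h0 := lwalk_add Atriv ξ i 1 0 ((0:ℤ),(-1:ℤ)) ω
        have h1 : lwalk Atriv ξ 1 0 ((0:ℤ),(-1:ℤ)) ω = ((-1:ℤ),(-1:ℤ)) := by
          rw [hW_eq ξ hval 1 ω, hS1_eq ξ hval ω hξ1]
          norm_num [hξ1]
        rw [Nat.zero_add, h1] at h0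
        rw [← h0, hW_eq ξ hval]
      have hinv : ∀ i, (lwalk A ξ i 1 ((-1:ℤ),(-1:ℤ)) ω = lwalk Atriv ξ i 1 ((-1:ℤ),(-1:ℤ)) ω)
          ∨ (lwalk A ξ i 1 ((-1:ℤ),(-1:ℤ)) ω).1 ≤ -(N:ℤ) := by
        intro i
        induction i with
        | zero => exact Or.inl rfl
        | succ i ih =>
          rw [lwalk_snoc, lwalk_snoc]
          rcases ih with h | h
          · by_cases hAc : A (lwalk A ξ i 1 ((-1:ℤ),(-1:ℤ)) ω)
            · left
              rw [lnext, if_pos hAc, h]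
              rw [lnext, if_pos (show Atriv _ from trivial)]
            · right
              rw [lnext, if_neg hAc]
              have h6 : (lwalk Atriv ξ i 1 ((-1:ℤ),(-1:ℤ)) ω).1 < 0 := by
                rw [ht i]
                exact hS (1+i) (by omega)
              rw [h] at hAc
              rw [h]
              by_cases hx : -(N:ℤ) < (lwalk Atriv ξ i 1 ((-1:ℤ),(-1:ℤ)) ω).1
              · exact absurd (show A _ from ⟨hx, h6⟩) hAc
              · omega
          · right
            have hAc : ¬ A (lwalk A ξ i 1 ((-1:ℤ),(-1:ℤ)) ω) := fun hcon => by
              have h2 := hcon.1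
              omega
            rw [lnext, if_neg hAc]
            exact h
      rcases hinv j with h | h
      · have hlt : (lwalk A ξ j 1 ((-1:ℤ),(-1:ℤ)) ω).1 < 0 := by
          rw [h, ht j]
          exact hS (1+j) (by omega)
        by_cases hb : -(N:ℤ) < (lwalk A ξ j 1 ((-1:ℤ),(-1:ℤ)) ω).1
        · refine Or.inl ?_
          show A _
          rw [hA]
          exact ⟨hb, hlt⟩
        · refine Or.inr ?_
          show _ ≤ -(N:ℤ)
          omega
      · exact Or.inr h
    have hiA : indic {c : ℤ×ℤ | A c} = fA A := by
      funext c
      by_cases h : A c <;> simp [indic, fA, h]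
    have hiB : indic {c : ℤ×ℤ | c.1 ≤ -(N:ℤ)}
        = (fun c : ℤ×ℤ => if c.1 ≤ -(N:ℤ) then (1:ℝ) else 0) := by
      funext c
      by_cases h : c.1 ≤ -(N:ℤ) <;> simp [indic, h]
    have hbr1 := bridge hp0 hp1' P ξ hmeas hindep hval hprob A j 1 ((-1:ℤ),(-1:ℤ))
      {c : ℤ×ℤ | A c}
    have hbr2 := bridge hp0 hp1' P ξ hmeas hindep hval hprob A j 1 ((-1:ℤ),(-1:ℤ))
      {c : ℤ×ℤ | c.1 ≤ -(N:ℤ)}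
    have hb1 : lG p A (indic {c : ℤ×ℤ | A c}) j ((-1:ℤ),(-1:ℤ)) ≤ (1-(1-p)^N)^k := by
      rw [hiA, hj]
      refine lG_window_decay hp0 hp1' A (-(N:ℤ)) N ?_ k _
      intro c hc
      rw [hA] at hc
      refine ⟨hc.1, ?_⟩
      have h2 := hc.2
      push_cast
      omega
    have hb2 : lG p A (indic {c : ℤ×ℤ | c.1 ≤ -(N:ℤ)}) j ((-1:ℤ),(-1:ℤ))
        ≤ (2+p)/((N:ℝ)+1-p) := by
      rw [hiB]
      have h := lG_bot hp0 hp1' halg N hN j ((-1:ℤ),(-1:ℤ))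
        (by push_cast; omega) (by norm_num) (by norm_num)
      rw [← hA] at h
      have hlM : lM p ((-1:ℤ),(-1:ℤ)) = -1 := by unfold lM; norm_num
      rw [hlM] at h
      have hpos : (0:ℝ) < (N:ℝ)+1-p := by
        have : (1:ℝ) ≤ (N:ℝ) := by exact_mod_cast hN
        linarith
      rw [le_div_iff₀ hpos]
      nlinarith [h]
    calc P Bneg ≤ P ({ω | lwalk A ξ j 1 ((-1:ℤ),(-1:ℤ)) ω ∈ {c : ℤ×ℤ | A c}}
          ∪ {ω | lwalk A ξ j 1 ((-1:ℤ),(-1:ℤ)) ω ∈ {c : ℤ×ℤ | c.1 ≤ -(N:ℤ)}}) :=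
        measure_mono hincl
      _ ≤ P {ω | lwalk A ξ j 1 ((-1:ℤ),(-1:ℤ)) ω ∈ {c : ℤ×ℤ | A c}}
          + P {ω | lwalk A ξ j 1 ((-1:ℤ),(-1:ℤ)) ω ∈ {c : ℤ×ℤ | c.1 ≤ -(N:ℤ)}} :=
        measure_union_le _ _
      _ ≤ _ := by
          rw [hbr1, hbr2]
          exact add_le_add (ENNReal.ofReal_le_ofReal hb1) (ENNReal.ofReal_le_ofReal hb2)
  have step1 : ∀ N : ℕ, 1 ≤ N → P Bneg ≤ ENNReal.ofReal ((2+p)/((N:ℝ)+1-p)) := by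
    intro N hN
    apply le_ofReal_of_forall
    intro ε hε
    have hrlt : 1 - (1-p)^N < 1 := by
      have : 0 < (1-p)^N := pow_pos (by linarith) N
      linarith
    obtain ⟨k, hk⟩ := exists_pow_lt_of_lt_one hε hrlt
    calc P Bneg ≤ ENNReal.ofReal ((1-(1-p)^N)^k) + ENNReal.ofReal ((2+p)/((N:ℝ)+1-p)) :=
        key N hN k
      _ ≤ ENNReal.ofReal ε + ENNReal.ofReal ((2+p)/((N:ℝ)+1-p)) :=
        add_le_add (ENNReal.ofReal_le_ofReal hk.le) le_rfl
      _ = ENNReal.ofReal ((2+p)/((N:ℝ)+1-p)) + ENNReal.ofReal ε := add_comm _ _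
  have step2 : P Bneg ≤ ENNReal.ofReal 0 := by
    apply le_ofReal_of_forall
    intro ε hε
    obtain ⟨N, hNgt⟩ := exists_nat_gt ((2+p)/ε)
    have hN1 : 1 ≤ N := by
      rcases Nat.eq_zero_or_pos N with h0 | h1
      · subst h0
        exfalso
        have hd : (0:ℝ) ≤ (2+p)/ε := div_nonneg (by linarith) hε.le
        simp at hNgt
        linarith
      · exact h1
    have hpos : (0:ℝ) < (N:ℝ)+1-p := by
      have : (1:ℝ) ≤ (N:ℝ) := by exact_mod_cast hN1
      linarith
    have hlt : (2+p)/((N:ℝ)+1-p) ≤ ε := by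
      rw [div_le_iff₀ hpos]
      rw [div_lt_iff₀ hε] at hNgt
      nlinarith [mul_nonneg hε.le (by linarith : (0:ℝ) ≤ 1 - p)]
    calc P Bneg ≤ ENNReal.ofReal ((2+p)/((N:ℝ)+1-p)) := step1 N hN1
      _ ≤ ENNReal.ofReal ε := ENNReal.ofReal_le_ofReal hlt
      _ ≤ ENNReal.ofReal 0 + ENNReal.ofReal ε := le_add_self
  have hfin : P Bneg ≤ 0 := by simpa using step2
  exact le_antisymm hfin zero_le


lemma PC_zero {p : ℝ} (hp0 : 0 ≤ p) (hp1 : p < 1) (halg : p^2 + 2*p = 1)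
    (P : Measure Ω) [IsProbabilityMeasure P] (ξ : ℕ → Ω → ℤ)
    (hmeas : ∀ n, Measurable (ξ n))
    (hindep : iIndepFun ξ P)
    (hval : ∀ n ω, ξ n ω = 1 ∨ ξ n ω = -1)
    (hprob : ∀ n, 1 ≤ n → P {ω | ξ n ω = 1} = ENNReal.ofReal p) (m : ℕ) :
    P {ω | lwalk Atriv ξ m 0 ((0:ℤ),(-1:ℤ)) ω = (1,1)
      ∧ ∀ n, m ≤ n → 1 ≤ ladderS ξ n ω} = 0 := by
  have hp1' : p ≤ 1 := hp1.le
  set C := {ω | lwalk Atriv ξ m 0 ((0:ℤ),(-1:ℤ)) ω = (1,1)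
      ∧ ∀ n, m ≤ n → 1 ≤ ladderS ξ n ω} with hC
  have key : ∀ K : ℕ, 2 ≤ K → ∀ k : ℕ,
      P C ≤ ENNReal.ofReal ((1-(1-p)^K)^k) + ENNReal.ofReal ((1+p)/(K:ℝ)) := by
    intro K hK k
    set A : ℤ × ℤ → Prop := fun c => 0 < c.1 ∧ c.1 < (K:ℤ) with hA
    set j := K * k with hj
    have hincl : C ⊆ {ω | lwalk A ξ j m ((1:ℤ),(1:ℤ)) ω ∈ {c : ℤ×ℤ | A c}}
        ∪ {ω | lwalk A ξ j m ((1:ℤ),(1:ℤ)) ω ∈ {c : ℤ×ℤ | (K:ℤ) ≤ c.1}} := by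
      intro ω hω
      obtain ⟨hWm, hS⟩ := hω
      have ht : ∀ i, (lwalk Atriv ξ i m ((1:ℤ),(1:ℤ)) ω).1 = ladderS ξ (m+i) ω := by
        intro i
        have h0 := lwalk_add Atriv ξ i m 0 ((0:ℤ),(-1:ℤ)) ω
        rw [Nat.zero_add, hWm] at h0
        rw [← h0, hW_eq ξ hval]
      have hinv : ∀ i, (lwalk A ξ i m ((1:ℤ),(1:ℤ)) ω = lwalk Atriv ξ i m ((1:ℤ),(1:ℤ)) ω)
          ∨ (K:ℤ) ≤ (lwalk A ξ i m ((1:ℤ),(1:ℤ)) ω).1 := by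
        intro i
        induction i with
        | zero => exact Or.inl rfl
        | succ i ih =>
          rw [lwalk_snoc, lwalk_snoc]
          rcases ih with h | h
          · by_cases hAc : A (lwalk A ξ i m ((1:ℤ),(1:ℤ)) ω)
            · left
              rw [lnext, if_pos hAc, h]
              rw [lnext, if_pos (show Atriv _ from trivial)]
            · right
              rw [lnext, if_neg hAc]
              have h6 : 1 ≤ (lwalk Atriv ξ i m ((1:ℤ),(1:ℤ)) ω).1 := by
                rw [ht i]
                exact hS (m+i) (by omega)
              rw [h] at hAc
              rw [h]
              by_cases hx : (lwalk Atriv ξ i m ((1:ℤ),(1:ℤ)) ω).1 < (K:ℤ)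
              · exact absurd (show A _ from ⟨by omega, hx⟩) hAc
              · omega
          · right
            have hAc : ¬ A (lwalk A ξ i m ((1:ℤ),(1:ℤ)) ω) := fun hcon => by
              have h2 := hcon.2
              omega
            rw [lnext, if_neg hAc]
            exact h
      rcases hinv j with h | h
      · have hlt : 1 ≤ (lwalk A ξ j m ((1:ℤ),(1:ℤ)) ω).1 := by
          rw [h, ht j]
          exact hS (m+j) (by omega)
        by_cases hb : (lwalk A ξ j m ((1:ℤ),(1:ℤ)) ω).1 < (K:ℤ)
        · refine Or.inl ?_
          show A _
          exact ⟨by omega, hb⟩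
        · refine Or.inr ?_
          show (K:ℤ) ≤ (lwalk A ξ j m ((1:ℤ),(1:ℤ)) ω).1
          omega
      · exact Or.inr h
    have hiA : indic {c : ℤ×ℤ | A c} = fA A := by
      funext c
      by_cases h : A c <;> simp [indic, fA, h]
    have hiB : indic {c : ℤ×ℤ | (K:ℤ) ≤ c.1}
        = (fun c : ℤ×ℤ => if (K:ℤ) ≤ c.1 then (1:ℝ) else 0) := by
      funext c
      by_cases h : (K:ℤ) ≤ c.1 <;> simp [indic, h]
    have hbr1 := bridge hp0 hp1' P ξ hmeas hindep hval hprob A j m ((1:ℤ),(1:ℤ))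
      {c : ℤ×ℤ | A c}
    have hbr2 := bridge hp0 hp1' P ξ hmeas hindep hval hprob A j m ((1:ℤ),(1:ℤ))
      {c : ℤ×ℤ | (K:ℤ) ≤ c.1}
    have hb1 : lG p A (indic {c : ℤ×ℤ | A c}) j ((1:ℤ),(1:ℤ)) ≤ (1-(1-p)^K)^k := by
      rw [hiA, hj]
      refine lG_window_decay hp0 hp1' A 0 K ?_ k _
      intro c hc
      rw [hA] at hc
      exact ⟨hc.1, by push_cast; omega⟩
    have hb2 : lG p A (indic {c : ℤ×ℤ | (K:ℤ) ≤ c.1}) j ((1:ℤ),(1:ℤ))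
        ≤ (1+p)/(K:ℝ) := by
      rw [hiB]
      have h := lG_top hp0 hp1' halg K j ((1:ℤ),(1:ℤ))
        (by norm_num) (by push_cast; omega) (by norm_num)
      rw [← hA] at h
      have hlM : lM p ((1:ℤ),(1:ℤ)) = 1 + p := by unfold lM; norm_num
      rw [hlM] at h
      have hpos : (0:ℝ) < (K:ℝ) := by
        have : (2:ℝ) ≤ (K:ℝ) := by exact_mod_cast hK
        linarith
      rw [le_div_iff₀ hpos]
      nlinarith [h]
    calc P C ≤ P ({ω | lwalk A ξ j m ((1:ℤ),(1:ℤ)) ω ∈ {c : ℤ×ℤ | A c}}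
          ∪ {ω | lwalk A ξ j m ((1:ℤ),(1:ℤ)) ω ∈ {c : ℤ×ℤ | (K:ℤ) ≤ c.1}}) :=
        measure_mono hincl
      _ ≤ P {ω | lwalk A ξ j m ((1:ℤ),(1:ℤ)) ω ∈ {c : ℤ×ℤ | A c}}
          + P {ω | lwalk A ξ j m ((1:ℤ),(1:ℤ)) ω ∈ {c : ℤ×ℤ | (K:ℤ) ≤ c.1}} :=
        measure_union_le _ _
      _ ≤ _ := by
          rw [hbr1, hbr2]
          exact add_le_add (ENNReal.ofReal_le_ofReal hb1) (ENNReal.ofReal_le_ofReal hb2)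
  have step1 : ∀ K : ℕ, 2 ≤ K → P C ≤ ENNReal.ofReal ((1+p)/(K:ℝ)) := by
    intro K hK
    apply le_ofReal_of_forall
    intro ε hε
    have hrlt : 1 - (1-p)^K < 1 := by
      have : 0 < (1-p)^K := pow_pos (by linarith) K
      linarith
    obtain ⟨k, hk⟩ := exists_pow_lt_of_lt_one hε hrlt
    calc P C ≤ ENNReal.ofReal ((1-(1-p)^K)^k) + ENNReal.ofReal ((1+p)/(K:ℝ)) := key K hK k
      _ ≤ ENNReal.ofReal ε + ENNReal.ofReal ((1+p)/(K:ℝ)) :=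
        add_le_add (ENNReal.ofReal_le_ofReal hk.le) le_rfl
      _ = ENNReal.ofReal ((1+p)/(K:ℝ)) + ENNReal.ofReal ε := add_comm _ _
  have step2 : P C ≤ ENNReal.ofReal 0 := by
    apply le_ofReal_of_forall
    intro ε hε
    obtain ⟨K, hKgt⟩ := exists_nat_gt (max 2 ((1+p)/ε))
    have hK2 : 2 ≤ K := by
      have h2 : (2:ℝ) < (K:ℝ) := lt_of_le_of_lt (le_max_left _ _) hKgt
      exact_mod_cast h2.le
    have hpos : (0:ℝ) < (K:ℝ) := by
      have : (2:ℝ) ≤ (K:ℝ) := by exact_mod_cast hK2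
      linarith
    have hlt : (1+p)/(K:ℝ) ≤ ε := by
      have hgt : (1+p)/ε < (K:ℝ) := lt_of_le_of_lt (le_max_right _ _) hKgt
      rw [div_le_iff₀ hpos]
      rw [div_lt_iff₀ hε] at hgt
      nlinarith
    calc P C ≤ ENNReal.ofReal ((1+p)/(K:ℝ)) := step1 K hK2
      _ ≤ ENNReal.ofReal ε := ENNReal.ofReal_le_ofReal hlt
      _ ≤ ENNReal.ofReal 0 + ENNReal.ofReal ε := le_add_self
  have hfin : P C ≤ 0 := by simpa using step2
  exact le_antisymm hfin zero_le

end LadderAux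

/-- If `p = √2 - 1` and `T = inf {n ≥ 1 : S_n = 0}`, then
`P(ξ₁ = -1 and T < ∞) = q`. -/
theorem ladder_return_after_down_step (p q : ℝ) (hp : p = Real.sqrt 2 - 1) (hq : q = 1 - p)
    (P : Measure Ω) [IsProbabilityMeasure P]
    (ξ : ℕ → Ω → ℤ) (hmeas : ∀ n, Measurable (ξ n))
    (hindep : iIndepFun ξ P)
    (hval : ∀ n ω, ξ n ω = 1 ∨ ξ n ω = -1)
    (hprob : ∀ n, 1 ≤ n → P {ω | ξ n ω = 1} = ENNReal.ofReal p) :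
    P {ω | ξ 1 ω = -1 ∧ ∃ n, 1 ≤ n ∧ ladderS ξ n ω = 0} = ENNReal.ofReal q := by
  classical
  have h2 : Real.sqrt 2 ^ 2 = 2 := Real.sq_sqrt (by norm_num)
  have hs0 : 0 ≤ Real.sqrt 2 := Real.sqrt_nonneg 2
  have h1lt : 1 < Real.sqrt 2 := by nlinarith
  have hlt2 : Real.sqrt 2 < 2 := by nlinarith
  have hp0 : 0 ≤ p := by rw [hp]; linarith
  have hp1 : p < 1 := by rw [hp]; linarith
  have halg : p^2 + 2*p = 1 := by rw [hp]; nlinarith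
  have hqmeas : P {ω | ξ 1 ω = -1} = ENNReal.ofReal q := by
    have hc : {ω | ξ 1 ω = -1} = {ω | ξ 1 ω = 1}ᶜ := by
      ext ω
      rcases hval 1 ω with h | h <;> simp [h]
    have hms : MeasurableSet {ω | ξ 1 ω = 1} := by
      have he : {ω | ξ 1 ω = 1} = ξ 1 ⁻¹' {1} := by ext ω; simp
      rw [he]
      exact (hmeas 1) (MeasurableSet.singleton 1)
    rw [hc, prob_compl_eq_one_sub hms, hprob 1 le_rfl, hq, ENNReal.ofReal_sub _ hp0,
      ENNReal.ofReal_one]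
  have hPB := LadderAux.PBneg_zero hp0 hp1 halg P ξ hmeas hindep hval hprob
  have hPC := LadderAux.PC_zero hp0 hp1 halg P ξ hmeas hindep hval hprob
  have hdecomp : {ω | ξ 1 ω = -1 ∧ ∀ n, 1 ≤ n → ladderS ξ n ω ≠ 0}
      ⊆ {ω | ξ 1 ω = -1 ∧ ∀ n, 1 ≤ n → ladderS ξ n ω < 0}
        ∪ ⋃ m, {ω | LadderAux.lwalk LadderAux.Atriv ξ m 0 ((0:ℤ),(-1:ℤ)) ω = (1,1)
            ∧ ∀ n, m ≤ n → 1 ≤ ladderS ξ n ω} := by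
    intro ω hω
    obtain ⟨hξ1, hno⟩ := hω
    by_cases hneg : ∀ n, 1 ≤ n → ladderS ξ n ω < 0
    · exact Or.inl ⟨hξ1, hneg⟩
    · push_neg at hneg
      obtain ⟨n₀, hn₀1, hn₀⟩ := hneg
      have hex : ∃ n, 1 ≤ n ∧ 0 ≤ ladderS ξ n ω := ⟨n₀, hn₀1, by omega⟩
      set m := Nat.find hex with hmdef
      obtain ⟨hm1, hm0⟩ := Nat.find_spec hex
      rw [← hmdef] at hm1 hm0
      have hmin : ∀ k, k < m → ¬ (1 ≤ k ∧ 0 ≤ ladderS ξ k ω) := fun k hk =>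
        Nat.find_min hex hk
      have hS1 : ladderS ξ 1 ω = -1 := LadderAux.hS1_eq ξ hval ω hξ1
      have hm2 : 2 ≤ m := by
        by_contra hcon
        push_neg at hcon
        have hm1' : m = 1 := by omega
        rw [hm1'] at hm0
        omega
      have hprev : ladderS ξ (m-1) ω ≤ -1 := by
        have h := hmin (m-1) (by omega)
        push_neg at h
        have := h (by omega)
        omega
      obtain ⟨heq, hbd, hdown, hup⟩ := LadderAux.hstep_facts ξ hval (m-1) ω
      have hm' : m - 1 + 1 = m := by omega
      rw [hm'] at heq hbd hdown hup
      have hξm : ξ m ω = 1 := by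
        rcases hval m ω with h | h
        · exact h
        · have := hdown h
          omega
      have hSm : ladderS ξ m ω = 1 := by
        have hne := hno m (by omega)
        omega
      have hforever : ∀ n, m ≤ n → 1 ≤ ladderS ξ n ω := by
        intro n
        induction n with
        | zero => intro h; exact absurd h (by omega)
        | succ n ih =>
          intro hn
          rcases Nat.lt_or_ge n m with h | h
          · have he : n + 1 = m := by omega
            rw [he, hSm]
          · have h1 := ih h
            obtain ⟨heq2, hbd2, -, -⟩ := LadderAux.hstep_facts ξ hval n ω
            have := hno (n+1) (by omega)
            omega
      have hWm : LadderAux.lwalk LadderAux.Atriv ξ m 0 ((0:ℤ),(-1:ℤ)) ω = (1,1) := by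
        rw [LadderAux.hW_eq ξ hval]
        have hm0' : ¬ m = 0 := by omega
        rw [hSm, if_neg hm0', hξm]
      exact Or.inr (Set.mem_iUnion.2 ⟨m, hWm, hforever⟩)
  have hbad : P {ω | ξ 1 ω = -1 ∧ ∀ n, 1 ≤ n → ladderS ξ n ω ≠ 0} = 0 := by
    refine le_antisymm ?_ zero_le
    calc P {ω | ξ 1 ω = -1 ∧ ∀ n, 1 ≤ n → ladderS ξ n ω ≠ 0}
        ≤ P ({ω | ξ 1 ω = -1 ∧ ∀ n, 1 ≤ n → ladderS ξ n ω < 0}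
          ∪ ⋃ m, {ω | LadderAux.lwalk LadderAux.Atriv ξ m 0 ((0:ℤ),(-1:ℤ)) ω = (1,1)
              ∧ ∀ n, m ≤ n → 1 ≤ ladderS ξ n ω}) := measure_mono hdecomp
      _ ≤ P {ω | ξ 1 ω = -1 ∧ ∀ n, 1 ≤ n → ladderS ξ n ω < 0}
          + P (⋃ m, {ω | LadderAux.lwalk LadderAux.Atriv ξ m 0 ((0:ℤ),(-1:ℤ)) ω = (1,1)
              ∧ ∀ n, m ≤ n → 1 ≤ ladderS ξ n ω}) := measure_union_le _ _
      _ ≤ 0 + ∑' m, P {ω | LadderAux.lwalk LadderAux.Atriv ξ m 0 ((0:ℤ),(-1:ℤ)) ω = (1,1)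
              ∧ ∀ n, m ≤ n → 1 ≤ ladderS ξ n ω} :=
        add_le_add (le_of_eq hPB) (measure_iUnion_le _)
      _ = 0 := by simp only [hPC, tsum_zero, add_zero, zero_add]
  refine le_antisymm ?_ ?_
  · calc P {ω | ξ 1 ω = -1 ∧ ∃ n, 1 ≤ n ∧ ladderS ξ n ω = 0}
        ≤ P {ω | ξ 1 ω = -1} := measure_mono (fun ω h => h.1)
      _ = ENNReal.ofReal q := hqmeas
  · rw [← hqmeas]
    calc P {ω | ξ 1 ω = -1}
        ≤ P ({ω | ξ 1 ω = -1 ∧ ∃ n, 1 ≤ n ∧ ladderS ξ n ω = 0}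
          ∪ {ω | ξ 1 ω = -1 ∧ ∀ n, 1 ≤ n → ladderS ξ n ω ≠ 0}) := by
          apply measure_mono
          intro ω hω
          by_cases h : ∃ n, 1 ≤ n ∧ ladderS ξ n ω = 0
          · exact Or.inl ⟨hω, h⟩
          · push_neg at h
            exact Or.inr ⟨hω, h⟩
      _ ≤ P {ω | ξ 1 ω = -1 ∧ ∃ n, 1 ≤ n ∧ ladderS ξ n ω = 0}
          + P {ω | ξ 1 ω = -1 ∧ ∀ n, 1 ≤ n → ladderS ξ n ω ≠ 0} := measure_union_le _ _
      _ = P {ω | ξ 1 ω = -1 ∧ ∃ n, 1 ≤ n ∧ ladderS ξ n ω = 0} := by rw [hbad, add_zero]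


end
end
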